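/- arXiv:0708.1706 — 3 statements merged into one kernel-verified Lean document; each statement's English description precedes it below -/
import Mathlib

section
/- Let p be prime and P(t,x) = ∫_{Q_p} χ(-xξ) e^{-t|ξ|_p^α} dμ(ξ) be the transition density of the p-adic α-stable process with α > 0, t > 0. Then for every m ∈ Z and t > 0, ∫_{|x|_p ≤ p^m} P(t,x) dμ(x) = (1 - p^{-1}) Σ_{i=0}^∞ p^{-i} exp(-p^{-α(m+i)} t). -/
open MeasureTheory
open scoped ENNReal

namespace Stmt7Aux

lemma toReal_zpow' (a : ℝ≥0∞) (n : ℤ) : (a ^ n).toReal = a.toReal ^ n := by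
  cases n with
  | ofNat k => simp
  | negSucc k => simp [zpow_negSucc, ENNReal.toReal_inv]

variable {p : ℕ} [hp : Fact p.Prime] [MeasurableSpace ℚ_[p]] [BorelSpace ℚ_[p]]

/-- The closed ball of radius `p^n` in `ℚ_p`. -/
def B (p : ℕ) [Fact p.Prime] (n : ℤ) : Set ℚ_[p] := {x : ℚ_[p] | ‖x‖ ≤ (p : ℝ) ^ n}

lemma measurableSet_B (n : ℤ) : MeasurableSet (B p n) :=
  measurableSet_le measurable_norm measurable_const

lemma hp1 : (1 : ℝ) < (p : ℝ) := by exact_mod_cast hp.out.one_lt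

lemma hp0 : (0 : ℝ) < (p : ℝ) := by exact_mod_cast hp.out.pos

lemma hpQ : ((p : ℚ_[p])) ≠ 0 := by
  exact_mod_cast (Nat.cast_ne_zero (R := ℚ_[p])).2 hp.out.ne_zero

lemma norm_p_zpow (n : ℤ) : ‖((p : ℚ_[p]) ^ n)‖ = (p : ℝ) ^ (-n) := by
  rw [norm_zpow, Padic.norm_p, inv_zpow, ← zpow_neg]

/-- covering of `B (n+1)` by `p` translates of `B n`. -/
lemma B_succ_subset (n : ℤ) :
    B p (n + 1) ⊆ ⋃ j ∈ Finset.range p,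
      (fun x => x + -((j : ℚ_[p]) * (p : ℚ_[p]) ^ (-(n + 1)))) ⁻¹' B p n := by
  intro x hx
  have hx' : ‖x‖ ≤ (p : ℝ) ^ (n + 1) := hx
  have hy : ‖x * (p : ℚ_[p]) ^ (n + 1)‖ ≤ 1 := by
    rw [norm_mul, norm_p_zpow]
    calc ‖x‖ * (p:ℝ) ^ (-(n+1)) ≤ (p:ℝ) ^ (n+1) * (p:ℝ) ^ (-(n+1)) := by
          apply mul_le_mul_of_nonneg_right hx' (by positivity)
      _ = 1 := by rw [← zpow_add₀ (ne_of_gt hp0), add_neg_cancel, zpow_zero]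
  set z : ℤ_[p] := ⟨x * (p : ℚ_[p]) ^ (n + 1), hy⟩ with hz
  set j : ℕ := z.appr 1 with hj
  have hjp : j < p := by simpa using PadicInt.appr_lt z 1
  have hspec : ‖z - (j : ℤ_[p])‖ ≤ (p : ℝ) ^ (-(1:ℕ) : ℤ) :=
    (PadicInt.norm_le_pow_iff_mem_span_pow _ 1).2 (by simpa using PadicInt.appr_spec 1 z)
  have hspec' : ‖x * (p : ℚ_[p]) ^ (n + 1) - (j : ℚ_[p])‖ ≤ (p : ℝ)⁻¹ := by
    have : ((z - (j : ℤ_[p]) : ℤ_[p]) : ℚ_[p]) = x * (p : ℚ_[p]) ^ (n + 1) - (j : ℚ_[p]) := by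
      rw [PadicInt.coe_sub, hz]
      push_cast
      ring
    rw [← this]
    simpa [PadicInt.norm_def] using hspec
  refine Set.mem_biUnion (Finset.mem_range.2 hjp) ?_
  show ‖x + -((j : ℚ_[p]) * (p : ℚ_[p]) ^ (-(n + 1)))‖ ≤ (p : ℝ) ^ n
  have key : x + -((j : ℚ_[p]) * (p : ℚ_[p]) ^ (-(n + 1)))
      = (x * (p : ℚ_[p]) ^ (n + 1) - (j : ℚ_[p])) * (p : ℚ_[p]) ^ (-(n + 1)) := by
    rw [sub_mul, mul_assoc, ← zpow_add₀ hpQ, add_neg_cancel, zpow_zero, mul_one]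
    ring
  rw [key, norm_mul, norm_p_zpow, neg_neg]
  calc ‖x * (p : ℚ_[p]) ^ (n + 1) - (j : ℚ_[p])‖ * (p:ℝ) ^ (n+1)
      ≤ (p:ℝ)⁻¹ * (p:ℝ) ^ (n+1) := by
        apply mul_le_mul_of_nonneg_right hspec' (by positivity)
    _ = (p : ℝ) ^ n := by
        rw [← zpow_neg_one, ← zpow_add₀ (ne_of_gt hp0)]
        norm_num

lemma translate_mem_B {n : ℤ} {c x : ℚ_[p]} (hc : ‖c‖ ≤ (p : ℝ) ^ n) (hx : x ∈ B p n) :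
    x + c ∈ B p n := by
  have := Padic.nonarchimedean x c
  exact le_trans this (max_le hx hc)

lemma measure_B_succ (μ : Measure ℚ_[p]) [μ.IsAddHaarMeasure] (n : ℤ) :
    μ (B p (n + 1)) = p * μ (B p n) := by
  classical
  set c : ℕ → ℚ_[p] := fun j => (j : ℚ_[p]) * (p : ℚ_[p]) ^ (-(n + 1)) with hc
  have hCmeas : ∀ j : ℕ, MeasurableSet ((fun x => x + -(c j)) ⁻¹' B p n) := fun j =>
    (measurableSet_B n).preimage (measurable_add_const _)
  have hCsub : ∀ j : ℕ, (fun x => x + -(c j)) ⁻¹' B p n ⊆ B p (n + 1) := by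
    intro j x hx
    have hcj : ‖c j‖ ≤ (p : ℝ) ^ (n + 1) := by
      rw [hc, norm_mul, norm_p_zpow, neg_neg]
      calc ‖((j:ℕ) : ℚ_[p])‖ * (p:ℝ) ^ (n+1) ≤ 1 * (p:ℝ) ^ (n+1) := by
            apply mul_le_mul_of_nonneg_right ?_ (by positivity)
            exact_mod_cast Padic.norm_int_le_one (j : ℤ)
        _ = (p:ℝ) ^ (n+1) := one_mul _
    have hx' : ‖x + -(c j)‖ ≤ (p : ℝ) ^ n := hx
    have : x = (x + -(c j)) + c j := by ring
    rw [B, Set.mem_setOf_eq, this]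
    calc ‖(x + -(c j)) + c j‖ ≤ max ‖x + -(c j)‖ ‖c j‖ := Padic.nonarchimedean _ _
      _ ≤ (p : ℝ) ^ (n + 1) := by
          apply max_le _ hcj
          exact le_trans hx' (zpow_le_zpow_right₀ (le_of_lt hp1) (by omega))
  have hdisj : (↑(Finset.range p) : Set ℕ).PairwiseDisjoint
      (fun j => (fun x => x + -(c j)) ⁻¹' B p n) := by
    intro j hj k hk hjk
    refine Set.disjoint_left.2 ?_
    intro x hxj hxk
    apply hjk
    have hxj' : ‖x - c j‖ ≤ (p : ℝ) ^ n := by simpa [sub_eq_add_neg, B] using hxj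
    have hxk' : ‖x - c k‖ ≤ (p : ℝ) ^ n := by simpa [sub_eq_add_neg, B] using hxk
    have hdiff : ‖c j - c k‖ ≤ (p : ℝ) ^ n := by
      have : c j - c k = (x - c k) - (x - c j) := by ring
      rw [this]
      calc ‖(x - c k) - (x - c j)‖ = ‖(x - c k) + (-(x - c j))‖ := by rw [sub_eq_add_neg]
        _ ≤ max ‖x - c k‖ ‖-(x - c j)‖ := Padic.nonarchimedean _ _
        _ ≤ (p : ℝ) ^ n := max_le hxk' (by rw [norm_neg]; exact hxj')
    have hcast : c j - c k = (((j : ℤ) - (k : ℤ) : ℤ) : ℚ_[p]) * (p : ℚ_[p]) ^ (-(n + 1)) := by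
      rw [hc]; push_cast; ring
    have hnorm : ‖(((j : ℤ) - (k : ℤ) : ℤ) : ℚ_[p])‖ < 1 := by
      have hne : ((p:ℝ) ^ (-(n+1)) : ℝ) ≠ 0 := (zpow_pos hp0 _).ne'
      rw [hcast, norm_mul, norm_p_zpow, neg_neg] at hdiff
      have : ‖(((j : ℤ) - (k : ℤ) : ℤ) : ℚ_[p])‖ ≤ (p : ℝ)⁻¹ := by
        have hpn : (0:ℝ) < (p:ℝ) ^ (n+1) := zpow_pos hp0 _
        rw [← le_div_iff₀ hpn] at hdiff
        calc ‖(((j : ℤ) - (k : ℤ) : ℤ) : ℚ_[p])‖ ≤ (p:ℝ)^n / (p:ℝ)^(n+1) := hdiff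
          _ = (p:ℝ)⁻¹ := by
              rw [div_eq_iff (ne_of_gt hpn), ← zpow_neg_one, ← zpow_add₀ (ne_of_gt hp0)]
              norm_num
      exact lt_of_le_of_lt this (by rw [inv_lt_one_iff₀]; right; exact hp1)
    have hdvd : (p : ℤ) ∣ (j : ℤ) - (k : ℤ) := (Padic.norm_intCast_lt_one_iff).1 hnorm
    have hne : (j : ℤ) - (k : ℤ) ≠ 0 → False := by
      intro h0
      have habs : |(j : ℤ) - (k : ℤ)| < p := by
        rw [abs_lt]
        constructor <;> [skip; skip] <;>
          · simp only [Finset.mem_coe, Finset.mem_range] at hj hk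
            omega
      have := Int.le_of_dvd (abs_pos.2 h0) ((dvd_abs _ _).2 hdvd)
      omega
    have : (j : ℤ) = (k : ℤ) := by by_contra h; exact hne (sub_ne_zero.2 h)
    exact_mod_cast this
  have hcover : B p (n + 1) = ⋃ j ∈ Finset.range p, (fun x => x + -(c j)) ⁻¹' B p n := by
    apply Set.Subset.antisymm (B_succ_subset n)
    intro x hx
    simp only [Set.mem_iUnion, Finset.mem_range] at hx
    obtain ⟨j, _, hj⟩ := hx
    exact hCsub j hj
  rw [hcover, measure_biUnion_finset hdisj (fun j _ => hCmeas j)]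
  have : ∀ j ∈ Finset.range p, μ ((fun x => x + -(c j)) ⁻¹' B p n) = μ (B p n) := fun j _ =>
    measure_preimage_add_right μ _ _
  rw [Finset.sum_congr rfl this, Finset.sum_const, Finset.card_range, nsmul_eq_mul]


lemma measure_B (μ : Measure ℚ_[p]) [μ.IsAddHaarMeasure]
    (hμ : μ {x : ℚ_[p] | ‖x‖ ≤ 1} = 1) (n : ℤ) :
    μ (B p n) = ((p : ℝ≥0∞)) ^ n := by
  have hp0' : ((p : ℝ≥0∞)) ≠ 0 := by
    exact_mod_cast (Nat.cast_ne_zero (R := ℝ≥0∞)).2 hp.out.ne_zero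
  have hpt : ((p : ℝ≥0∞)) ≠ ⊤ := by simp
  have hbase : μ (B p 0) = 1 := by
    have : B p 0 = {x : ℚ_[p] | ‖x‖ ≤ 1} := by
      ext x; simp [B]
    rw [this, hμ]
  induction n using Int.induction_on with
  | zero => simpa using hbase
  | succ k ih =>
      rw [measure_B_succ μ k, ih, ENNReal.zpow_add hp0' hpt, zpow_one, mul_comm]
  | pred k ih =>
      have hrec := measure_B_succ μ (-(k:ℤ) - 1)
      have h1 : (-(k:ℤ) - 1) + 1 = -(k:ℤ) := by ring
      rw [h1, ih] at hrec
      have hstep : μ (B p (-(k:ℤ) - 1)) = (p : ℝ≥0∞)⁻¹ * ((p : ℝ≥0∞) * μ (B p (-(k:ℤ) - 1))) := by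
        rw [← mul_assoc, ENNReal.inv_mul_cancel hp0' hpt, one_mul]
      rw [hstep, ← hrec, show (-(k:ℤ) - 1 : ℤ) = -(k:ℤ) + -1 by ring,
        ENNReal.zpow_add hp0' hpt, mul_comm]
      congr 1
      simp [zpow_neg_one]

lemma measure_B_ne_top (μ : Measure ℚ_[p]) [μ.IsAddHaarMeasure]
    (hμ : μ {x : ℚ_[p] | ‖x‖ ≤ 1} = 1) (n : ℤ) : μ (B p n) ≠ ⊤ := by
  rw [measure_B μ hμ n]
  have hp0' : ((p : ℝ≥0∞)) ≠ 0 := by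
    exact_mod_cast (Nat.cast_ne_zero (R := ℝ≥0∞)).2 hp.out.ne_zero
  exact (ENNReal.zpow_lt_top hp0' (by simp) n).ne

lemma toReal_measure_B (μ : Measure ℚ_[p]) [μ.IsAddHaarMeasure]
    (hμ : μ {x : ℚ_[p] | ‖x‖ ≤ 1} = 1) (n : ℤ) : (μ (B p n)).toReal = (p : ℝ) ^ n := by
  rw [measure_B μ hμ n, toReal_zpow']
  simp

/-- The sphere of radius `p^z`. -/
def S (p : ℕ) [Fact p.Prime] (z : ℤ) : Set ℚ_[p] := {x : ℚ_[p] | ‖x‖ = (p : ℝ) ^ z}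

lemma measurableSet_S (z : ℤ) : MeasurableSet (S p z) :=
  measurableSet_eq_fun measurable_norm measurable_const

lemma S_eq (z : ℤ) : S p z = B p z \ B p (z - 1) := by
  ext x
  simp only [S, B, Set.mem_setOf_eq, Set.mem_diff, not_le]
  constructor
  · intro h
    rw [h]
    exact ⟨le_refl _, zpow_lt_zpow_right₀ hp1 (by omega)⟩
  · rintro ⟨h1, h2⟩
    have hx0 : x ≠ 0 := by
      intro h0
      rw [h0, norm_zero] at h2
      exact absurd h2 (not_lt.2 (zpow_pos hp0 _).le)
    rw [Padic.norm_eq_zpow_neg_valuation hx0] at h1 h2 ⊢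
    have hle : -x.valuation ≤ z := (zpow_le_zpow_iff_right₀ hp1).1 h1
    have hgt : z - 1 < -x.valuation := (zpow_lt_zpow_iff_right₀ hp1).1 h2
    congr 1
    omega

lemma measure_S (μ : Measure ℚ_[p]) [μ.IsAddHaarMeasure]
    (hμ : μ {x : ℚ_[p] | ‖x‖ ≤ 1} = 1) (z : ℤ) :
    (μ (S p z)).toReal = (p : ℝ) ^ z * (1 - (p:ℝ)⁻¹) := by
  have hsub : B p (z - 1) ⊆ B p z := fun x hx =>
    le_trans hx (zpow_le_zpow_right₀ hp1.le (by omega))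
  have hle : μ (B p (z-1)) ≤ μ (B p z) := measure_mono hsub
  rw [S_eq, measure_diff hsub (measurableSet_B (z-1)).nullMeasurableSet
      (measure_B_ne_top μ hμ _),
    ENNReal.toReal_sub_of_le hle (measure_B_ne_top μ hμ _),
    toReal_measure_B μ hμ, toReal_measure_B μ hμ, mul_sub, mul_one,
    ← zpow_neg_one, ← zpow_add₀ (ne_of_gt hp0)]
  congr 2

lemma measure_S_ennreal_le (μ : Measure ℚ_[p]) [μ.IsAddHaarMeasure]
    (hμ : μ {x : ℚ_[p] | ‖x‖ ≤ 1} = 1) (z : ℤ) : μ (S p z) ≠ ⊤ := by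
  rw [S_eq]
  exact fun h => (measure_B_ne_top μ hμ z)
    (top_le_iff.1 (h ▸ measure_mono Set.diff_subset) )


section Exp

variable {α t : ℝ}

lemma hEcont (hα : 0 < α) : Continuous (fun ξ : ℚ_[p] => Real.exp (-t * ‖ξ‖ ^ α)) :=
  Real.continuous_exp.comp (continuous_const.mul
    (continuous_norm.rpow_const fun _ => Or.inr hα.le))

lemma hEle1 (hα : 0 < α) (ht : 0 < t) (ξ : ℚ_[p]) :
    Real.exp (-t * ‖ξ‖ ^ α) ≤ 1 := by
  rw [Real.exp_le_one_iff, neg_mul, neg_nonpos]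
  positivity

lemma integrableOn_E (μ : Measure ℚ_[p]) {s : Set ℚ_[p]} (hs : μ s ≠ ⊤)
    (hα : 0 < α) (ht : 0 < t) :
    IntegrableOn (fun ξ : ℚ_[p] => Real.exp (-t * ‖ξ‖ ^ α)) s μ := by
  apply Measure.integrableOn_of_bounded hs (hEcont hα).aestronglyMeasurable
  filter_upwards with ξ
  rw [Real.norm_eq_abs, abs_of_pos (Real.exp_pos _)]
  exact hEle1 hα ht ξ

lemma sphere_integral (μ : Measure ℚ_[p]) [μ.IsAddHaarMeasure]
    (hμ : μ {x : ℚ_[p] | ‖x‖ ≤ 1} = 1) (hα : 0 < α) (ht : 0 < t) (z : ℤ) :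
    ∫ ξ in S p z, Real.exp (-t * ‖ξ‖ ^ α) ∂μ
      = (p : ℝ) ^ z * (1 - (p:ℝ)⁻¹) * Real.exp (-t * ((p : ℝ) ^ z) ^ α) := by
  rw [setIntegral_congr_fun (measurableSet_S z)
    (g := fun _ => Real.exp (-t * ((p : ℝ) ^ z) ^ α)) (fun ξ hξ => by rw [S] at hξ; rw [hξ]),
    setIntegral_const, measureReal_def, measure_S μ hμ z, smul_eq_mul]

lemma pow_rpow_comm (n : ℕ) (hα : 0 < α) :
    (((p : ℝ) ^ (n : ℕ)) : ℝ) ^ α = ((p : ℝ) ^ α) ^ (n : ℕ) := by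
  rw [← Real.rpow_natCast (p:ℝ) n, ← Real.rpow_mul hp0.le, mul_comm,
    Real.rpow_mul hp0.le, Real.rpow_natCast]

lemma summable_a (hα : 0 < α) (ht : 0 < t) :
    Summable (fun i : ℕ =>
      (p : ℝ) ^ (i + 1 : ℕ) * (1 - (p:ℝ)⁻¹) * Real.exp (-t * ((p:ℝ) ^ α) ^ (i + 1 : ℕ))) := by
  set Q : ℝ := (p : ℝ) ^ α with hQ
  have hQ1 : 1 < Q := by
    rw [hQ]
    exact Real.one_lt_rpow_iff_of_pos hp0 |>.2 (Or.inl ⟨hp1, hα⟩)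
  set c : ℝ := 1 - (p:ℝ)⁻¹ with hcdef
  have hc : 0 < c := by
    rw [hcdef, sub_pos, inv_lt_one_iff₀]
    right; exact hp1
  set a : ℕ → ℝ := fun i => (p : ℝ) ^ (i + 1 : ℕ) * c * Real.exp (-t * Q ^ (i + 1 : ℕ)) with ha
  have hapos : ∀ i, 0 < a i := fun i => by
    rw [ha]
    exact mul_pos (mul_pos (pow_pos hp0 _) hc) (Real.exp_pos _)
  set F : ℕ → ℝ := fun n => (p : ℝ) * Real.exp (t * Q ^ (n+1) - t * Q ^ (n+2)) with hF
  have hfac : ∀ n, a (n + 1) = F n * a n := by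
    intro n
    have hexp : Real.exp (t * Q ^ (n+1) - t * Q ^ (n+2)) * Real.exp (-t * Q ^ (n+1))
        = Real.exp (-t * Q ^ (n+2)) := by
      rw [← Real.exp_add]
      congr 1
      ring
    simp only [ha, hF]
    rw [← hexp]
    ring
  have hFlim : Filter.Tendsto F Filter.atTop (nhds 0) := by
    have h1 : Filter.Tendsto (fun n : ℕ => t * Q ^ (n+1) * (Q - 1)) Filter.atTop Filter.atTop := by
      apply Filter.Tendsto.atTop_mul_const (by linarith)
      apply Filter.Tendsto.const_mul_atTop ht
      exact (tendsto_pow_atTop_atTop_of_one_lt hQ1).comp (Filter.tendsto_add_atTop_nat 1)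
    have h2 : Filter.Tendsto (fun n : ℕ => t * Q ^ (n+1) - t * Q ^ (n+2)) Filter.atTop
        Filter.atBot := by
      have : (fun n : ℕ => t * Q ^ (n+1) - t * Q ^ (n+2))
          = fun n : ℕ => -(t * Q ^ (n+1) * (Q - 1)) := by
        funext n
        ring
      rw [this]
      exact Filter.tendsto_neg_atTop_atBot.comp h1
    have h3 : Filter.Tendsto F Filter.atTop (nhds ((p:ℝ) * 0)) :=
      (Real.tendsto_exp_atBot.comp h2).const_mul (p:ℝ)
    simpa using h3
  have hev : ∀ᶠ n in Filter.atTop, F n ≤ 1/2 :=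
    hFlim.eventually_le_const (by norm_num)
  apply summable_of_ratio_norm_eventually_le (r := 1/2) (by norm_num)
  filter_upwards [hev] with n hn
  rw [Real.norm_eq_abs, Real.norm_eq_abs, abs_of_pos (hapos _), abs_of_pos (hapos _), hfac]
  have hF0 : 0 ≤ F n := by
    rw [hF]
    positivity
  exact mul_le_mul_of_nonneg_right hn (hapos n).le

lemma univ_decomp :
    (Set.univ : Set ℚ_[p]) = B p 0 ∪ ⋃ i : ℕ, S p ((i : ℤ) + 1) := by
  apply Set.Subset.antisymm _ (Set.subset_univ _)
  intro x _
  by_cases h : ‖x‖ ≤ 1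
  · left
    show ‖x‖ ≤ (p:ℝ) ^ (0:ℤ)
    simpa using h
  · right
    push_neg at h
    have hx0 : x ≠ 0 := by
      intro h0
      rw [h0, norm_zero] at h
      linarith
    have hval := Padic.norm_eq_zpow_neg_valuation hx0
    have hpos : 0 < -x.valuation := by
      by_contra hcon
      push_neg at hcon
      have : (p:ℝ) ^ (-x.valuation) ≤ (p:ℝ) ^ (0:ℤ) :=
        zpow_le_zpow_right₀ hp1.le hcon
      rw [hval] at h
      simp only [zpow_zero] at this
      linarith
    refine Set.mem_iUnion.2 ⟨(-x.valuation - 1).toNat, ?_⟩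
    show ‖x‖ = (p:ℝ) ^ (((-x.valuation - 1).toNat : ℤ) + 1)
    rw [hval]
    congr 1
    omega

lemma integrable_E (μ : Measure ℚ_[p]) [μ.IsAddHaarMeasure]
    (hμ : μ {x : ℚ_[p] | ‖x‖ ≤ 1} = 1) (hα : 0 < α) (ht : 0 < t) :
    Integrable (fun ξ : ℚ_[p] => Real.exp (-t * ‖ξ‖ ^ α)) μ := by
  rw [← integrableOn_univ, univ_decomp]
  apply IntegrableOn.union
  · exact integrableOn_E μ (measure_B_ne_top μ hμ 0) hα ht
  · apply integrableOn_iUnion_of_summable_integral_norm (s := fun i : ℕ => S p ((i:ℤ)+1))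
      (fun i => integrableOn_E μ (measure_S_ennreal_le μ hμ _) hα ht)
    have hcong : ∀ i : ℕ, (∫ ξ in S p ((i:ℤ)+1), ‖Real.exp (-t * ‖ξ‖ ^ α)‖ ∂μ)
        = (p : ℝ) ^ (i + 1 : ℕ) * (1 - (p:ℝ)⁻¹)
            * Real.exp (-t * ((p:ℝ) ^ α) ^ (i + 1 : ℕ)) := by
      intro i
      have h1 : (fun ξ : ℚ_[p] => ‖Real.exp (-t * ‖ξ‖ ^ α)‖)
          = fun ξ : ℚ_[p] => Real.exp (-t * ‖ξ‖ ^ α) := by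
        funext ξ
        rw [Real.norm_eq_abs, abs_of_pos (Real.exp_pos _)]
      rw [h1, sphere_integral μ hμ hα ht]
      have hz : (p:ℝ) ^ ((i:ℤ)+1) = (p:ℝ) ^ (i + 1 : ℕ) := by
        rw [← zpow_natCast (p:ℝ) (i+1)]
        norm_num
      rw [hz, pow_rpow_comm _ hα]
    rw [show (fun i : ℕ => ∫ ξ in S p ((i:ℤ)+1), ‖Real.exp (-t * ‖ξ‖ ^ α)‖ ∂μ)
        = fun i : ℕ => (p : ℝ) ^ (i + 1 : ℕ) * (1 - (p:ℝ)⁻¹)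
            * Real.exp (-t * ((p:ℝ) ^ α) ^ (i + 1 : ℕ)) from funext hcong]
    exact summable_a hα ht

end Exp


lemma char_integral (μ : Measure ℚ_[p]) [μ.IsAddHaarMeasure]
    (hμ : μ {x : ℚ_[p] | ‖x‖ ≤ 1} = 1)
    (χ : ℚ_[p] → ℂ)
    (hχadd : ∀ a b, χ (a + b) = χ a * χ b)
    (hχtriv : ∀ a : ℚ_[p], ‖a‖ ≤ 1 → χ a = 1)
    (hχnontriv : ∀ a : ℚ_[p], 1 < ‖a‖ → χ a ≠ 1)
    (m : ℤ) (ξ : ℚ_[p]) :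
    ∫ x in B p m, χ (-(x * ξ)) ∂μ
      = if ‖ξ‖ ≤ (p : ℝ) ^ (-m) then (((p : ℝ) ^ m : ℝ) : ℂ) else 0 := by
  by_cases h : ‖ξ‖ ≤ (p : ℝ) ^ (-m)
  · rw [if_pos h, setIntegral_congr_fun (measurableSet_B m) (g := fun _ => (1:ℂ))
      (fun x hx => hχtriv _ ?_), setIntegral_const, measureReal_def, toReal_measure_B μ hμ,
      Complex.real_smul, mul_one]
    rw [norm_neg, norm_mul]
    calc ‖x‖ * ‖ξ‖ ≤ (p:ℝ) ^ m * (p:ℝ) ^ (-m) := by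
          apply mul_le_mul hx h (norm_nonneg _) (zpow_pos hp0 _).le
      _ = 1 := by rw [← zpow_add₀ (ne_of_gt hp0), add_neg_cancel, zpow_zero]
  · rw [if_neg h]
    push_neg at h
    set x0 : ℚ_[p] := (p : ℚ_[p]) ^ (-m) with hx0
    have hx0norm : ‖x0‖ = (p : ℝ) ^ m := by rw [hx0, norm_p_zpow, neg_neg]
    have hbig : 1 < ‖-(x0 * ξ)‖ := by
      rw [norm_neg, norm_mul, hx0norm]
      calc (1:ℝ) = (p:ℝ) ^ m * (p:ℝ) ^ (-m) := by
            rw [← zpow_add₀ (ne_of_gt hp0), add_neg_cancel, zpow_zero]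
        _ < (p:ℝ) ^ m * ‖ξ‖ := by
            apply mul_lt_mul_of_pos_left h (zpow_pos hp0 _)
    have hne : χ (-(x0 * ξ)) ≠ 1 := hχnontriv _ hbig
    set g : ℚ_[p] → ℂ := (B p m).indicator (fun x => χ (-(x * ξ))) with hg
    have hkey : ∀ x, g (x + x0) = χ (-(x0 * ξ)) * g x := by
      intro x
      by_cases hx : x ∈ B p m
      · have hx' : x + x0 ∈ B p m := translate_mem_B (le_of_eq hx0norm) hx
        rw [hg, Set.indicator_of_mem hx', Set.indicator_of_mem hx, ← hχadd]
        congr 1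
        ring
      · have hx' : x + x0 ∉ B p m := by
          intro hmem
          apply hx
          have hrw : x = (x + x0) + (-x0) := by ring
          rw [hrw]
          exact translate_mem_B (by rw [norm_neg]; exact le_of_eq hx0norm) hmem
        rw [hg, Set.indicator_of_notMem hx', Set.indicator_of_notMem hx, mul_zero]
    have h1 : ∫ x, g x ∂μ = χ (-(x0 * ξ)) * ∫ x, g x ∂μ := by
      conv_lhs => rw [← integral_add_right_eq_self g x0]
      rw [show (fun x => g (x + x0)) = fun x => χ (-(x0 * ξ)) * g x from funext hkey]
      exact integral_const_mul _ _
    have h2 : (χ (-(x0 * ξ)) - 1) * ∫ x, g x ∂μ = 0 := by linear_combination -h1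
    have h3 : ∫ x, g x ∂μ = 0 := by
      rcases mul_eq_zero.1 h2 with hcase | hcase
      · exact absurd (sub_eq_zero.1 hcase) hne
      · exact hcase
    rw [← integral_indicator (measurableSet_B m), ← hg, h3]


lemma ball_integral (μ : Measure ℚ_[p]) [μ.IsAddHaarMeasure]
    (hμ : μ {x : ℚ_[p] | ‖x‖ ≤ 1} = 1) {α t : ℝ} (hα : 0 < α) (ht : 0 < t) (m : ℤ) :
    ∫ ξ in B p (-m), Real.exp (-t * ‖ξ‖ ^ α) ∂μ
      = ∑' i : ℕ, (p:ℝ) ^ (-m - (i:ℤ)) * (1 - (p:ℝ)⁻¹)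
          * Real.exp (-t * ((p:ℝ) ^ (-m - (i:ℤ))) ^ α) := by
  have hU : (⋃ i : ℕ, S p (-m - (i:ℤ))) = B p (-m) \ {0} := by
    apply Set.Subset.antisymm
    · intro x hx
      obtain ⟨i, hi⟩ := Set.mem_iUnion.1 hx
      have hxn : ‖x‖ = (p:ℝ) ^ (-m - (i:ℤ)) := hi
      constructor
      · show ‖x‖ ≤ (p:ℝ) ^ (-m)
        rw [hxn]
        exact zpow_le_zpow_right₀ hp1.le (by omega)
      · simp only [Set.mem_singleton_iff]
        intro h0
        rw [h0, norm_zero] at hxn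
        exact absurd hxn.symm (ne_of_gt (zpow_pos hp0 _))
    · rintro x ⟨hx, hx0⟩
      simp only [Set.mem_singleton_iff] at hx0
      have hval := Padic.norm_eq_zpow_neg_valuation (p := p) hx0
      have hle : ‖x‖ ≤ (p:ℝ) ^ (-m) := hx
      rw [hval] at hle
      have hvm : -x.valuation ≤ -m := (zpow_le_zpow_iff_right₀ hp1).1 hle
      refine Set.mem_iUnion.2 ⟨(x.valuation - m).toNat, ?_⟩
      show ‖x‖ = (p:ℝ) ^ (-m - ((x.valuation - m).toNat : ℤ))
      rw [hval]
      congr 1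
      omega
  have hzero : μ (B p (-m) ∩ ({0} : Set ℚ_[p])) = 0 :=
    le_antisymm (le_trans (measure_mono Set.inter_subset_right)
      (measure_singleton (0:ℚ_[p])).le) (by simp)
  have hae : (B p (-m) \ ({0} : Set ℚ_[p])) =ᵐ[μ] B p (-m) := diff_ae_eq_self.2 hzero
  have hdisj : Pairwise (Function.onFun Disjoint fun i : ℕ => S p (-m - (i:ℤ))) := by
    intro i j hij
    rw [Function.onFun]
    apply Set.disjoint_left.2
    intro x hxi hxj
    have hxi' : ‖x‖ = (p:ℝ) ^ (-m - (i:ℤ)) := hxi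
    have hxj' : ‖x‖ = (p:ℝ) ^ (-m - (j:ℤ)) := hxj
    rw [hxi'] at hxj'
    have h1 := (zpow_le_zpow_iff_right₀ hp1).1 hxj'.le
    have h2 := (zpow_le_zpow_iff_right₀ hp1).1 hxj'.ge
    apply hij
    omega
  have hint : IntegrableOn (fun ξ : ℚ_[p] => Real.exp (-t * ‖ξ‖ ^ α))
      (⋃ i : ℕ, S p (-m - (i:ℤ))) μ := by
    rw [hU]
    exact (integrableOn_E μ (measure_B_ne_top μ hμ (-m)) hα ht).mono_set Set.diff_subset
  rw [← setIntegral_congr_set (diff_ae_eq_self.2 hzero), ← hU,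
    integral_iUnion (fun i => measurableSet_S _) hdisj hint]
  exact tsum_congr fun i => sphere_integral μ hμ hα ht _

end Stmt7Aux

open Stmt7Aux

/-- for the p-adic α-stable transition density
`P(t,x) = ∫ χ(-xξ) e^{-t|ξ|_p^α} dμ(ξ)`, one has
`∫_{|x|_p ≤ p^m} P(t,x) dμ(x) = (1-p⁻¹) Σ_{i=0}^∞ p^{-i} exp(-p^{-α(m+i)} t)`. -/
theorem stmt7 (p : ℕ) [Fact p.Prime] [MeasurableSpace ℚ_[p]] [BorelSpace ℚ_[p]]
    (μ : Measure ℚ_[p]) [μ.IsAddHaarMeasure]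
    (hμ : μ {x : ℚ_[p] | ‖x‖ ≤ 1} = 1)
    (χ : ℚ_[p] → ℂ) (hχmeas : Measurable χ)
    (hχnorm : ∀ a, ‖χ a‖ = 1)
    (hχadd : ∀ a b, χ (a + b) = χ a * χ b)
    (hχtriv : ∀ a : ℚ_[p], ‖a‖ ≤ 1 → χ a = 1)
    (hχnontriv : ∀ a : ℚ_[p], 1 < ‖a‖ → χ a ≠ 1)
    (α t : ℝ) (hα : 0 < α) (ht : 0 < t) (m : ℤ) :
    ∫ x in {x : ℚ_[p] | ‖x‖ ≤ (p : ℝ) ^ m},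
        (∫ ξ : ℚ_[p], χ (-(x * ξ)) * (Real.exp (-t * ‖ξ‖ ^ α) : ℂ) ∂μ) ∂μ =
      (((1 - (p : ℝ)⁻¹) *
        ∑' i : ℕ, (p : ℝ) ^ (-(i : ℤ)) *
          Real.exp (-(p : ℝ) ^ (-α * ((m : ℝ) + (i : ℝ))) * t) : ℝ) : ℂ) := by
  have hp1' : (1:ℝ) < (p:ℝ) := hp1
  have hp0' : (0:ℝ) < (p:ℝ) := hp0
  haveI : IsFiniteMeasure (μ.restrict (B p m)) :=
    ⟨by rw [Measure.restrict_apply_univ]; exact lt_top_iff_ne_top.2 (measure_B_ne_top μ hμ m)⟩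
  set F : ℚ_[p] → ℚ_[p] → ℂ :=
    fun x ξ => χ (-(x * ξ)) * (Real.exp (-t * ‖ξ‖ ^ α) : ℂ) with hF
  have hnormF : ∀ x ξ, ‖F x ξ‖ = Real.exp (-t * ‖ξ‖ ^ α) := by
    intro x ξ
    rw [hF, norm_mul, hχnorm, one_mul, Complex.norm_real, Real.norm_eq_abs,
      abs_of_pos (Real.exp_pos _)]
  have hmeasF : Measurable (Function.uncurry F) := by
    apply Measurable.mul
    · exact hχmeas.comp ((measurable_fst.mul measurable_snd).neg)
    · exact Complex.measurable_ofReal.comp ((hEcont hα).measurable.comp measurable_snd)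
  have hintF : Integrable (Function.uncurry F) ((μ.restrict (B p m)).prod μ) := by
    rw [integrable_prod_iff hmeasF.aestronglyMeasurable]
    constructor
    · apply Filter.Eventually.of_forall
      intro x
      apply Integrable.mono' (integrable_E μ hμ hα ht)
      · apply Measurable.aestronglyMeasurable
        apply Measurable.mul
        · exact hχmeas.comp ((measurable_id.const_mul x).neg)
        · exact Complex.measurable_ofReal.comp (hEcont hα).measurable
      · exact Filter.Eventually.of_forall fun ξ => (hnormF x ξ).le
    · have : (fun x => ∫ ξ, ‖F x ξ‖ ∂μ)
          = fun _ : ℚ_[p] => ∫ ξ, Real.exp (-t * ‖ξ‖ ^ α) ∂μ := by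
        funext x
        exact integral_congr_ae (Filter.Eventually.of_forall fun ξ => hnormF x ξ)
      simp only [Function.uncurry_apply_pair]
      rw [this]
      exact integrable_const _
  show ∫ x in B p m, (∫ ξ : ℚ_[p], F x ξ ∂μ) ∂μ = _
  rw [show ∫ x in B p m, (∫ ξ : ℚ_[p], F x ξ ∂μ) ∂μ
      = ∫ ξ, ∫ x, F x ξ ∂(μ.restrict (B p m)) ∂μ from integral_integral_swap hintF]
  have hinner : ∀ ξ : ℚ_[p], ∫ x, F x ξ ∂(μ.restrict (B p m))
      = (B p (-m)).indicator
          (fun ξ => (((p:ℝ) ^ m : ℝ) : ℂ) * (Real.exp (-t * ‖ξ‖ ^ α) : ℂ)) ξ := by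
    intro ξ
    have : ∫ x, F x ξ ∂(μ.restrict (B p m))
        = (∫ x in B p m, χ (-(x * ξ)) ∂μ) * (Real.exp (-t * ‖ξ‖ ^ α) : ℂ) :=
      integral_mul_const _ _
    rw [this, char_integral μ hμ χ hχadd hχtriv hχnontriv m ξ]
    by_cases hξ : ‖ξ‖ ≤ (p:ℝ) ^ (-m)
    · rw [if_pos hξ, Set.indicator_of_mem (show ξ ∈ B p (-m) from hξ)]
    · rw [if_neg hξ, Set.indicator_of_notMem (show ξ ∉ B p (-m) from hξ), zero_mul]
  have hreal : ∫ ξ in B p (-m), ((Real.exp (-t * ‖ξ‖ ^ α) : ℝ) : ℂ) ∂μ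
      = ((∫ ξ in B p (-m), Real.exp (-t * ‖ξ‖ ^ α) ∂μ : ℝ) : ℂ) := integral_ofReal
  rw [integral_congr_ae (Filter.Eventually.of_forall hinner),
    integral_indicator (measurableSet_B (-m)), integral_const_mul, hreal,
    ball_integral μ hμ hα ht m, ← Complex.ofReal_mul]
  congr 1
  rw [← tsum_mul_left, ← tsum_mul_left]
  apply tsum_congr
  intro i
  have harg : -t * ((p:ℝ) ^ (-m - (i:ℤ))) ^ α
      = -(p:ℝ) ^ (-α * ((m:ℝ) + (i:ℝ))) * t := by
    rw [← Real.rpow_intCast (p:ℝ) (-m - (i:ℤ)), ← Real.rpow_mul hp0'.le,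
      show (((-m - (i:ℤ)) : ℤ) : ℝ) * α = -α * ((m:ℝ) + (i:ℝ)) by push_cast; ring]
    ring
  have hpow : (p:ℝ) ^ (m:ℤ) * (p:ℝ) ^ (-m - (i:ℤ)) = (p:ℝ) ^ (-(i:ℤ)) := by
    rw [← zpow_add₀ (ne_of_gt hp0')]
    congr 1
    ring
  rw [harg]
  linear_combination ((1 - (p:ℝ)⁻¹) * Real.exp (-(p:ℝ) ^ (-α * ((m:ℝ) + (i:ℝ))) * t)) * hpow
end

section
/- Let p be prime, α ≥ 1, λ > α(1+α), and let b : Q_p → Q_p be Borel measurable with ∫_{Z_p} |b(x+y)|_p^{-λ} dμ(y) < ∞ for a fixed x ∈ Q_p. Then for every T > 0, ∫_0^T ∫_{Z_p} |b(x+y)|_p^{-α} P(t,y) dμ(y) dt < ∞, where P(t,y) is the p-adic α-stable transition density. -/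
set_option linter.unusedSectionVars false
set_option linter.unusedVariables false

open MeasureTheory Real Set
open scoped ENNReal NNReal

namespace Stmt14Aux

variable {p : ℕ} [hp : Fact p.Prime] [MeasurableSpace ℚ_[p]] [BorelSpace ℚ_[p]]

/-- closed ball of radius `p^r` in `ℚ_[p]` -/
def B (p : ℕ) [Fact p.Prime] (r : ℤ) : Set ℚ_[p] := {ξ | ‖ξ‖ ≤ (p : ℝ) ^ r}

lemma hp1 : (1 : ℝ) < (p : ℝ) := by exact_mod_cast hp.out.one_lt
lemma hp0 : (0 : ℝ) < (p : ℝ) := lt_trans one_pos hp1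
lemma hpne : (p : ℝ) ≠ 0 := ne_of_gt hp0

lemma measurableSet_B (r : ℤ) : MeasurableSet (B p r) :=
  (isClosed_le continuous_norm continuous_const).measurableSet

lemma B_zero_eq : B p 0 = {x : ℚ_[p] | ‖x‖ ≤ 1} := by simp [B]

lemma B_mono {r r' : ℤ} (h : r ≤ r') : B p r ⊆ B p r' := fun ξ hξ =>
  le_trans hξ (zpow_le_zpow_right₀ (le_of_lt hp1) h)

lemma mem_B_iff {r : ℤ} {ξ : ℚ_[p]} : ξ ∈ B p r ↔ ‖ξ‖ ≤ (p : ℝ) ^ r := Iff.rfl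

lemma zero_mem_B (r : ℤ) : (0 : ℚ_[p]) ∈ B p r := by
  simp [mem_B_iff, le_of_lt (zpow_pos hp0 r)]

lemma norm_shell {r : ℤ} {ξ : ℚ_[p]} (h : ξ ∈ B p (r + 1) \ B p r) :
    ‖ξ‖ = (p : ℝ) ^ (r + 1) := by
  have hξ0 : ξ ≠ 0 := fun hc => h.2 (hc ▸ zero_mem_B r)
  have hval := Padic.norm_eq_zpow_neg_valuation hξ0
  have h1 : -ξ.valuation ≤ r + 1 := by
    refine (zpow_le_zpow_iff_right₀ (hp1 (p := p))).1 ?_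
    rw [← hval]; exact h.1
  have h2 : ¬ (-ξ.valuation ≤ r) := fun hc =>
    h.2 (by rw [mem_B_iff, hval]; exact (zpow_le_zpow_iff_right₀ hp1).2 hc)
  rw [hval]; congr 1; omega

lemma mem_shell_of_not_mem {r : ℤ} {ξ : ℚ_[p]} (h : ξ ∉ B p r) :
    ∃ k : ℕ, ξ ∈ B p (r + 1 + k) \ B p (r + k) := by
  have hξ0 : ξ ≠ 0 := fun hc => h (hc ▸ zero_mem_B r)
  have hval := Padic.norm_eq_zpow_neg_valuation hξ0
  have h2 : ¬ (-ξ.valuation ≤ r) := fun hc =>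
    h (by rw [mem_B_iff, hval]; exact (zpow_le_zpow_iff_right₀ hp1).2 hc)
  refine ⟨(-ξ.valuation - (r + 1)).toNat, ?_, ?_⟩
  · rw [mem_B_iff, hval]
    exact (zpow_le_zpow_iff_right₀ hp1).2 (by omega)
  · rw [mem_B_iff, hval]
    intro hc
    have := (zpow_le_zpow_iff_right₀ hp1).1 hc
    omega

lemma shells_disjoint {r : ℤ} :
    Pairwise (Function.onFun Disjoint
      (fun k : ℕ => B p (r + 1 + k) \ B p (r + k))) := by
  have key : ∀ i j : ℕ, i < j →
      Disjoint (B p (r + 1 + i) \ B p (r + i)) (B p (r + 1 + j) \ B p (r + j)) := by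
    intro i j hij
    rw [Set.disjoint_left]
    rintro ξ ⟨h1, -⟩ ⟨-, h4⟩
    exact h4 (B_mono (by omega) h1)
  intro i j hij
  rcases hij.lt_or_gt with h | h
  · exact key i j h
  · exact (key j i h).symm

lemma iUnion_shells {r : ℤ} :
    (B p r)ᶜ = ⋃ k : ℕ, (B p (r + 1 + k) \ B p (r + k)) := by
  ext ξ
  simp only [Set.mem_compl_iff, Set.mem_iUnion]
  constructor
  · exact mem_shell_of_not_mem
  · rintro ⟨k, -, h2⟩ hc
    exact h2 (B_mono (by omega) hc)


variable {p : ℕ} [hp : Fact p.Prime] [MeasurableSpace ℚ_[p]] [BorelSpace ℚ_[p]]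
  {μ : Measure ℚ_[p]} [μ.IsAddHaarMeasure]

lemma measure_image_add (c : ℚ_[p]) (s : Set ℚ_[p]) :
    μ ((fun ξ => c + ξ) '' s) = μ s := by
  have : (fun ξ => c + ξ) '' s = (fun ξ => -c + ξ) ⁻¹' s := by
    ext ξ
    simp only [Set.mem_image, Set.mem_preimage]
    constructor
    · rintro ⟨a, ha, rfl⟩; simpa using ha
    · intro h; exact ⟨-c + ξ, h, by ring⟩
  rw [this, measure_preimage_add]

lemma pq_ne_zero : ((p : ℚ_[p]) ≠ 0) := by
  exact_mod_cast (Nat.cast_ne_zero (R := ℚ_[p])).2 hp.out.ne_zero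

lemma norm_p_pow_q (n : ℕ) : ‖((p : ℚ_[p]) ^ n)⁻¹‖ = (p : ℝ) ^ (n : ℤ) := by
  rw [norm_inv, norm_pow, Padic.norm_p, inv_pow, inv_inv, zpow_natCast]

lemma measure_B_nat_le (hμ : μ {x : ℚ_[p] | ‖x‖ ≤ 1} = 1) (n : ℕ) :
    μ (B p (n : ℤ)) ≤ ((p ^ n : ℕ) : ℝ≥0∞) := by
  classical
  set c : ℕ → ℚ_[p] := fun j => (j : ℚ_[p]) * ((p : ℚ_[p]) ^ n)⁻¹ with hc
  have hcov : B p (n : ℤ) ⊆ ⋃ j ∈ Finset.range (p ^ n), ((fun ξ => c j + ξ) '' B p 0) := by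
    intro ξ hξ
    have hz' : ‖(p : ℚ_[p]) ^ n * ξ‖ ≤ 1 := by
      rw [norm_mul, norm_pow, Padic.norm_p]
      have : ((p : ℝ)⁻¹) ^ n * ‖ξ‖ ≤ ((p : ℝ)⁻¹) ^ n * (p : ℝ) ^ (n : ℤ) := by
        apply mul_le_mul_of_nonneg_left hξ (by positivity)
      calc ((p : ℝ)⁻¹) ^ n * ‖ξ‖ ≤ ((p : ℝ)⁻¹) ^ n * (p : ℝ) ^ (n : ℤ) := this
        _ = 1 := by
          rw [zpow_natCast]
          rw [← mul_pow, inv_mul_cancel₀ hpne, one_pow]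
    set z : ℤ_[p] := ⟨(p : ℚ_[p]) ^ n * ξ, hz'⟩ with hzdef
    set j : ℕ := z.appr n with hj
    have hjlt : j < p ^ n := z.appr_lt n
    have hkey : ‖(p : ℚ_[p]) ^ n * ξ - (j : ℚ_[p])‖ ≤ (p : ℝ) ^ (-(n : ℤ)) := by
      have h1 : ‖z - (j : ℤ_[p])‖ ≤ (p : ℝ) ^ (-(n : ℤ)) :=
        (PadicInt.norm_le_pow_iff_mem_span_pow _ n).2 (PadicInt.appr_spec n z)
      rw [PadicInt.norm_def] at h1
      have h2 : ((z - (j : ℤ_[p]) : ℤ_[p]) : ℚ_[p]) = (p : ℚ_[p]) ^ n * ξ - (j : ℚ_[p]) := by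
        push_cast [hzdef]
        rfl
      rwa [h2] at h1
    simp only [Set.mem_iUnion, Finset.mem_range]
    refine ⟨j, hjlt, ξ - c j, ?_, by ring⟩
    rw [mem_B_iff]
    have hrw : ξ - c j = ((p : ℚ_[p]) ^ n)⁻¹ * ((p : ℚ_[p]) ^ n * ξ - (j : ℚ_[p])) := by
      have hpn : ((p : ℚ_[p]) ^ n) ≠ 0 := pow_ne_zero _ pq_ne_zero
      simp only [hc]
      field_simp [pq_ne_zero]
    rw [hrw, norm_mul, norm_p_pow_q, zpow_zero]
    calc (p : ℝ) ^ (n : ℤ) * ‖(p : ℚ_[p]) ^ n * ξ - (j : ℚ_[p])‖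
        ≤ (p : ℝ) ^ (n : ℤ) * (p : ℝ) ^ (-(n : ℤ)) :=
          mul_le_mul_of_nonneg_left hkey (le_of_lt (zpow_pos hp0 _))
      _ = 1 := by rw [← zpow_add₀ hpne]; simp
  calc μ (B p (n : ℤ)) ≤ μ (⋃ j ∈ Finset.range (p ^ n), ((fun ξ => c j + ξ) '' B p 0)) :=
        measure_mono hcov
    _ ≤ ∑ j ∈ Finset.range (p ^ n), μ ((fun ξ => c j + ξ) '' B p 0) :=
        measure_biUnion_finset_le _ _
    _ = ∑ j ∈ Finset.range (p ^ n), 1 := by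
        refine Finset.sum_congr rfl fun j _ => ?_
        rw [measure_image_add, B_zero_eq, hμ]
    _ = ((p ^ n : ℕ) : ℝ≥0∞) := by simp

lemma measure_B_neg_le (hμ : μ {x : ℚ_[p] | ‖x‖ ≤ 1} = 1) (m : ℕ) :
    ((p ^ m : ℕ) : ℝ≥0∞) * μ (B p (-(m : ℤ))) ≤ 1 := by
  classical
  set N : ℕ := p ^ m with hN
  set f : ℕ → Set ℚ_[p] := fun j => (fun ξ => (j : ℚ_[p]) + ξ) '' B p (-(m : ℤ)) with hf
  have hfpre : ∀ j : ℕ, f j = (fun ξ => -(j : ℚ_[p]) + ξ) ⁻¹' B p (-(m : ℤ)) := by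
    intro j
    ext ξ
    simp only [hf, Set.mem_image, Set.mem_preimage]
    constructor
    · rintro ⟨a, ha, rfl⟩; simpa using ha
    · intro h; exact ⟨-(j : ℚ_[p]) + ξ, h, by ring⟩
  have hmeas : ∀ j, MeasurableSet (f j) := fun j => by
    rw [hfpre]
    exact (measurableSet_B _).preimage (measurable_const_add _)
  have hdisj : (↑(Finset.range N) : Set ℕ).PairwiseDisjoint f := by
    intro i hi j hj hij
    simp only [Finset.coe_range, Set.mem_Iio] at hi hj
    rw [Function.onFun, Set.disjoint_left]
    rintro ξ ⟨a, ha, rfl⟩ ⟨a', ha', heq⟩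
    have hd : ‖((i : ℚ_[p]) - (j : ℚ_[p]))‖ ≤ (p : ℝ) ^ (-(m : ℤ)) := by
      have hij' : (i : ℚ_[p]) - (j : ℚ_[p]) = a' - a := by linear_combination -heq
      rw [hij']
      calc ‖a' - a‖ ≤ max ‖a'‖ ‖-a‖ := by
            simpa [sub_eq_add_neg] using Padic.nonarchimedean a' (-a)
        _ ≤ (p : ℝ) ^ (-(m : ℤ)) := by rw [norm_neg]; exact max_le ha' ha
    have hdvd : ((p : ℤ) ^ m) ∣ ((i : ℤ) - (j : ℤ)) := by
      refine (Padic.norm_int_le_pow_iff_dvd _ m).1 ?_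
      push_cast
      exact hd
    have hne : (i : ℤ) - (j : ℤ) ≠ 0 := fun hc => hij (by omega)
    have hge : ((p : ℤ) ^ m) ≤ |(i : ℤ) - (j : ℤ)| :=
      Int.le_of_dvd (abs_pos.2 hne) ((dvd_abs _ _).2 hdvd)
    have habs : |(i : ℤ) - (j : ℤ)| < (p : ℤ) ^ m := by
      have hiN : (i : ℤ) < (N : ℤ) := by exact_mod_cast hi
      have hjN : (j : ℤ) < (N : ℤ) := by exact_mod_cast hj
      have hNc : ((N : ℤ)) = (p : ℤ) ^ m := by push_cast [hN]; ring
      rw [abs_sub_lt_iff]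
      omega
    omega
  have hsub : (⋃ j ∈ Finset.range N, f j) ⊆ B p 0 := by
    rintro ξ hξ
    simp only [Set.mem_iUnion] at hξ
    obtain ⟨j, hj, a, ha, rfl⟩ := hξ
    rw [mem_B_iff, zpow_zero]
    calc ‖(j : ℚ_[p]) + a‖ ≤ max ‖(j : ℚ_[p])‖ ‖a‖ := Padic.nonarchimedean _ _
      _ ≤ 1 := by
        apply max_le
        · have : ((j : ℚ_[p])) = (((j : ℤ) : ℚ_[p])) := by norm_cast
          rw [this]
          exact Padic.norm_int_le_one _
        · exact le_trans ha (by
            calc (p : ℝ) ^ (-(m : ℤ)) ≤ (p : ℝ) ^ (0 : ℤ) :=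
                  zpow_le_zpow_right₀ (le_of_lt hp1) (by omega)
              _ = 1 := zpow_zero _)
  have hsum : ∑ j ∈ Finset.range N, μ (f j) = μ (⋃ j ∈ Finset.range N, f j) :=
    (measure_biUnion_finset hdisj fun j _ => hmeas j).symm
  have : (N : ℝ≥0∞) * μ (B p (-(m : ℤ))) = ∑ j ∈ Finset.range N, μ (f j) := by
    rw [Finset.sum_congr rfl (fun j _ => measure_image_add _ _)]
    simp [Finset.sum_const, mul_comm]
  rw [hN] at this
  rw [this, hsum]
  calc μ (⋃ j ∈ Finset.range N, f j) ≤ μ (B p 0) := measure_mono hsub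
    _ = 1 := by rw [B_zero_eq, hμ]

lemma measure_B_le (hμ : μ {x : ℚ_[p] | ‖x‖ ≤ 1} = 1) (r : ℤ) :
    μ (B p r) ≤ ENNReal.ofReal ((p : ℝ) ^ r) := by
  rcases le_or_gt 0 r with h | h
  · lift r to ℕ using h
    refine le_trans (measure_B_nat_le hμ r) ?_
    rw [← ENNReal.ofReal_natCast (p ^ r)]
    apply ENNReal.ofReal_le_ofReal
    rw [zpow_natCast]
    push_cast
    exact le_refl _
  · obtain ⟨m, rfl⟩ : ∃ m : ℕ, r = -(m : ℤ) := ⟨r.natAbs, by omega⟩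
    have h1 := measure_B_neg_le (μ := μ) hμ m
    have h2 : μ (B p (-(m:ℤ))) ≤ (((p ^ m : ℕ) : ℝ≥0∞))⁻¹ := by
      rw [ENNReal.le_inv_iff_mul_le, mul_comm]
      exact h1
    refine le_trans h2 (le_of_eq ?_)
    rw [zpow_neg, zpow_natCast, ← ENNReal.ofReal_natCast (p ^ m),
      ← ENNReal.ofReal_inv_of_pos (by exact_mod_cast pow_pos (Nat.cast_pos.2 hp.out.pos) m)]
    congr 1
    push_cast
    ring

lemma measure_B_ne_top (hμ : μ {x : ℚ_[p] | ‖x‖ ≤ 1} = 1) (r : ℤ) :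
    μ (B p r) ≠ ⊤ :=
  ne_top_of_le_ne_top ENNReal.ofReal_ne_top (measure_B_le hμ r)


lemma norm_z_eq (r : ℤ) : ‖((p : ℚ_[p]) ^ (-r) : ℚ_[p])‖ = (p : ℝ) ^ r := by
  rw [norm_zpow, Padic.norm_p, inv_zpow, ← zpow_neg, neg_neg]

lemma integral_char_ball (χ : ℚ_[p] → ℂ)
    (hχadd : ∀ a b, χ (a + b) = χ a * χ b) (hχtriv : χ 0 = 1)
    (hχnontriv : ∀ a : ℚ_[p], 1 < ‖a‖ → χ a ≠ 1)
    (y : ℚ_[p]) (r : ℤ) (hy : 1 < ‖y‖ * (p : ℝ) ^ r) :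
    ∫ ξ in B p r, χ (-(y * ξ)) ∂μ = 0 := by
  set z : ℚ_[p] := (p : ℚ_[p]) ^ (-r) with hz
  have hznorm : ‖z‖ = (p : ℝ) ^ r := norm_z_eq r
  have hyz : 1 < ‖y * z‖ := by rw [norm_mul, hznorm]; exact hy
  have hχyz : χ (y * z) ≠ 1 := hχnontriv _ hyz
  have hcne : χ (-(y * z)) ≠ 1 := by
    intro hc
    apply hχyz
    have h1 : χ (y * z) * χ (-(y * z)) = 1 := by
      rw [← hχadd]; simpa using hχtriv
    rw [hc, mul_one] at h1
    exact h1
  set I := ∫ ξ in B p r, χ (-(y * ξ)) ∂μ with hI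
  have hmemz : ∀ ξ : ℚ_[p], ξ ∈ B p r ↔ z + ξ ∈ B p r := by
    intro ξ
    constructor
    · intro h
      rw [mem_B_iff]
      calc ‖z + ξ‖ ≤ max ‖z‖ ‖ξ‖ := Padic.nonarchimedean _ _
        _ ≤ (p : ℝ) ^ r := max_le (le_of_eq hznorm) h
    · intro h
      rw [mem_B_iff]
      have : ξ = (z + ξ) + (-z) := by ring
      rw [this]
      calc ‖(z + ξ) + (-z)‖ ≤ max ‖z + ξ‖ ‖-z‖ := Padic.nonarchimedean _ _
        _ ≤ (p : ℝ) ^ r := max_le h (by rw [norm_neg]; exact le_of_eq hznorm)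
  have hkey : I = χ (-(y * z)) * I := by
    have h1 : I = ∫ ξ, (B p r).indicator (fun ξ => χ (-(y * ξ))) ξ ∂μ :=
      (integral_indicator (measurableSet_B r)).symm
    have h2 : ∫ ξ, (B p r).indicator (fun ξ => χ (-(y * ξ))) ξ ∂μ
        = ∫ ξ, (B p r).indicator (fun ξ => χ (-(y * ξ))) (z + ξ) ∂μ :=
      (integral_add_left_eq_self _ z).symm
    have h3 : ∀ ξ : ℚ_[p], (B p r).indicator (fun ξ => χ (-(y * ξ))) (z + ξ)
        = χ (-(y * z)) * (B p r).indicator (fun ξ => χ (-(y * ξ))) ξ := by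
      intro ξ
      by_cases hmem : ξ ∈ B p r
      · rw [Set.indicator_of_mem ((hmemz ξ).1 hmem), Set.indicator_of_mem hmem]
        rw [← hχadd]
        congr 1
        ring
      · rw [Set.indicator_of_notMem (fun hc => hmem ((hmemz ξ).2 hc)),
          Set.indicator_of_notMem hmem, mul_zero]
    calc I = ∫ ξ, (B p r).indicator (fun ξ => χ (-(y * ξ))) ξ ∂μ := h1
      _ = ∫ ξ, (B p r).indicator (fun ξ => χ (-(y * ξ))) (z + ξ) ∂μ := h2
      _ = ∫ ξ, χ (-(y * z)) * (B p r).indicator (fun ξ => χ (-(y * ξ))) ξ ∂μ := by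
          simp_rw [h3]
      _ = χ (-(y * z)) * ∫ ξ, (B p r).indicator (fun ξ => χ (-(y * ξ))) ξ ∂μ :=
          integral_const_mul _ _
      _ = χ (-(y * z)) * I := by rw [← h1]
  have hz0 : (1 - χ (-(y * z))) * I = 0 := by linear_combination hkey
  rcases mul_eq_zero.1 hz0 with h | h
  · exact absurd (sub_eq_zero.1 h).symm hcne
  · exact h

lemma exp_neg_le_rpow {s : ℝ} (hs : 0 < s) :
    ∃ c : ℝ, 0 < c ∧ ∀ x : ℝ, 0 < x → Real.exp (-x) ≤ c * x ^ (-s) := by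
  set N : ℕ := ⌈s⌉₊ with hN
  have hN1 : 1 ≤ N := Nat.one_le_ceil_iff.2 hs
  have hsN : s ≤ (N : ℝ) := Nat.le_ceil s
  refine ⟨(N : ℝ) ^ N + 1, by positivity, fun x hx => ?_⟩
  rcases le_or_gt x 1 with hx1 | hx1
  · have h1 : Real.exp (-x) ≤ 1 := Real.exp_le_one_iff.2 (by linarith)
    have h2 : (1 : ℝ) ≤ x ^ (-s) :=
      Real.one_le_rpow_of_pos_of_le_one_of_nonpos hx hx1 (by linarith)
    nlinarith [Real.rpow_nonneg (le_of_lt hx) (-s), pow_nonneg (by positivity : (0:ℝ) ≤ (N:ℝ)) N]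
  · have hxpos : (0:ℝ) < x := hx
    have hNpos : (0:ℝ) < N := by exact_mod_cast hN1
    have key : (x / N) ^ N ≤ Real.exp x := by
      calc (x / N) ^ N ≤ (1 + x / N) ^ N := by
            apply pow_le_pow_left₀ (by positivity)
            linarith
        _ ≤ (Real.exp (x / N)) ^ N := by
            apply pow_le_pow_left₀ (by positivity)
            linarith [Real.add_one_le_exp (x / N)]
        _ = Real.exp x := by
            rw [← Real.exp_nat_mul]
            congr 1
            field_simp
    have hxN : Real.exp (-x) ≤ (N : ℝ) ^ N / x ^ N := by
      rw [Real.exp_neg]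
      rw [div_pow] at key
      rw [le_div_iff₀ (by positivity)]
      rw [inv_mul_le_iff₀ (Real.exp_pos x)]
      rw [div_le_iff₀ (by positivity)] at key
      linarith [key]
    have hrpow : x ^ (-(N : ℝ)) ≤ x ^ (-s) :=
      Real.rpow_le_rpow_of_exponent_le (le_of_lt hx1) (by linarith)
    calc Real.exp (-x) ≤ (N : ℝ) ^ N / x ^ N := hxN
      _ = (N : ℝ) ^ N * x ^ (-(N : ℝ)) := by
          rw [Real.rpow_neg (le_of_lt hxpos), Real.rpow_natCast]
          ring
      _ ≤ (N : ℝ) ^ N * x ^ (-s) := by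
          apply mul_le_mul_of_nonneg_left hrpow (by positivity)
      _ ≤ ((N : ℝ) ^ N + 1) * x ^ (-s) := by
          apply mul_le_mul_of_nonneg_right _ (Real.rpow_nonneg (le_of_lt hxpos) _)
          linarith

lemma exp_sub_exp_le {a b : ℝ} (ha : 0 ≤ a) (hab : a ≤ b) :
    Real.exp (-a) - Real.exp (-b) ≤ b - a := by
  have h1 : Real.exp (-b) = Real.exp (-a) * Real.exp (a - b) := by
    rw [← Real.exp_add]; congr 1; ring
  have h2 : (a - b) + 1 ≤ Real.exp (a - b) := Real.add_one_le_exp _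
  have h3 : Real.exp (-a) ≤ 1 := Real.exp_le_one_iff.2 (by linarith)
  have h4 : (0:ℝ) < Real.exp (-a) := Real.exp_pos _
  nlinarith


lemma lintegral_exp_bound (hμ : μ {x : ℚ_[p] | ‖x‖ ≤ 1} = 1)
    {α : ℝ} (hα : 1 ≤ α) {ε : ℝ} (hε : 0 < ε) :
    ∃ D : ℝ≥0∞, D ≠ ⊤ ∧ ∀ t : ℝ, 0 < t →
      ∫⁻ ξ, ENNReal.ofReal (Real.exp (-t * ‖ξ‖ ^ α)) ∂μ ≤
        1 + D * ENNReal.ofReal (t ^ (-((1 + ε) / α))) := by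
  have hα0 : (0:ℝ) < α := lt_of_lt_of_le one_pos hα
  set s : ℝ := (1 + ε) / α with hsdef
  have hs : 0 < s := by positivity
  have hαs : α * s = 1 + ε := by rw [hsdef]; field_simp [hα0.ne']
  obtain ⟨c, hc, hcle⟩ := exp_neg_le_rpow hs
  set A : ℝ := (p : ℝ) with hA
  have hA1 : (1:ℝ) < A := hp1
  have hA0 : (0:ℝ) < A := hp0
  set w : ℝ≥0∞ := ENNReal.ofReal (A ^ (-ε)) with hw
  have hwlt : w < 1 := by
    rw [hw]
    refine ENNReal.ofReal_lt_one.2 ?_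
    exact Real.rpow_lt_one_of_one_lt_of_neg hA1 (by linarith)
  have hwne : (1 : ℝ≥0∞) - w ≠ 0 := by
    intro hcon
    exact absurd (tsub_eq_zero_iff_le.1 hcon) (not_le.2 hwlt)
  refine ⟨ENNReal.ofReal c * (1 - w)⁻¹, ?_, fun t ht => ?_⟩
  · exact ENNReal.mul_ne_top ENNReal.ofReal_ne_top (ENNReal.inv_ne_top.2 hwne)
  -- decompose the integral
  have hdecomp : ∫⁻ ξ, ENNReal.ofReal (Real.exp (-t * ‖ξ‖ ^ α)) ∂μ ≤
      (∫⁻ ξ in B p 0, ENNReal.ofReal (Real.exp (-t * ‖ξ‖ ^ α)) ∂μ) +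
      ∫⁻ ξ in (B p 0)ᶜ, ENNReal.ofReal (Real.exp (-t * ‖ξ‖ ^ α)) ∂μ := by
    rw [← setLIntegral_univ (μ := μ), ← Set.union_compl_self (B p 0)]
    exact lintegral_union_le _ _ _
  have hball : ∫⁻ ξ in B p 0, ENNReal.ofReal (Real.exp (-t * ‖ξ‖ ^ α)) ∂μ ≤ 1 := by
    calc ∫⁻ ξ in B p 0, ENNReal.ofReal (Real.exp (-t * ‖ξ‖ ^ α)) ∂μ
        ≤ ∫⁻ _ in B p 0, 1 ∂μ := by
          refine setLIntegral_mono measurable_const fun ξ _ => ?_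
          rw [show (1:ℝ≥0∞) = ENNReal.ofReal 1 by simp]
          apply ENNReal.ofReal_le_ofReal
          refine Real.exp_le_one_iff.2 ?_
          have : 0 ≤ ‖ξ‖ ^ α := Real.rpow_nonneg (norm_nonneg ξ) α
          nlinarith
      _ = μ (B p 0) := by rw [setLIntegral_const, one_mul]
      _ = 1 := by rw [B_zero_eq, hμ]
  -- the complement
  have hcompl : ∫⁻ ξ in (B p 0)ᶜ, ENNReal.ofReal (Real.exp (-t * ‖ξ‖ ^ α)) ∂μ ≤
      (ENNReal.ofReal c * (1 - w)⁻¹) * ENNReal.ofReal (t ^ (-s)) := by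
    rw [iUnion_shells (r := 0)]
    rw [lintegral_iUnion (fun k => (measurableSet_B _).diff (measurableSet_B _))
      shells_disjoint]
    have hterm : ∀ k : ℕ,
        ∫⁻ ξ in B p (0 + 1 + (k:ℤ)) \ B p (0 + (k:ℤ)),
          ENNReal.ofReal (Real.exp (-t * ‖ξ‖ ^ α)) ∂μ ≤
        (ENNReal.ofReal c * ENNReal.ofReal (t ^ (-s))) * w ^ (k + 1) := by
      intro k
      have hshell : ∀ ξ : ℚ_[p], ξ ∈ B p (0 + 1 + (k:ℤ)) \ B p (0 + (k:ℤ)) →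
          ‖ξ‖ = A ^ (((k:ℝ)) + 1) := by
        intro ξ hξ
        have h0 : (0 + 1 + (k:ℤ)) = ((0 + (k:ℤ)) + 1) := by ring
        rw [h0] at hξ
        have := norm_shell hξ
        rw [this, hA]
        rw [← Real.rpow_intCast (p : ℝ) (0 + (k:ℤ) + 1)]
        congr 1
        push_cast
        ring
      calc ∫⁻ ξ in B p (0 + 1 + (k:ℤ)) \ B p (0 + (k:ℤ)),
            ENNReal.ofReal (Real.exp (-t * ‖ξ‖ ^ α)) ∂μ
          ≤ ∫⁻ _ in B p (0 + 1 + (k:ℤ)) \ B p (0 + (k:ℤ)),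
            ENNReal.ofReal (Real.exp (-(t * A ^ ((((k:ℝ)) + 1) * α)))) ∂μ := by
            refine setLIntegral_mono measurable_const fun ξ hξ => ?_
            apply ENNReal.ofReal_le_ofReal
            apply Real.exp_le_exp.2
            rw [hshell ξ hξ, ← Real.rpow_mul (le_of_lt hA0)]
            exact le_of_eq (by ring)
        _ = ENNReal.ofReal (Real.exp (-(t * A ^ ((((k:ℝ)) + 1) * α)))) *
              μ (B p (0 + 1 + (k:ℤ)) \ B p (0 + (k:ℤ))) := setLIntegral_const _ _
        _ ≤ ENNReal.ofReal (Real.exp (-(t * A ^ ((((k:ℝ)) + 1) * α)))) *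
              ENNReal.ofReal (A ^ (((k:ℝ)) + 1)) := by
            apply mul_le_mul_right
            refine le_trans (measure_mono Set.diff_subset) ?_
            refine le_trans (measure_B_le hμ _) ?_
            apply ENNReal.ofReal_le_ofReal
            rw [← Real.rpow_intCast (p : ℝ) (0 + 1 + (k:ℤ))]
            apply le_of_eq
            rw [hA]
            congr 1
            push_cast
            ring
        _ ≤ (ENNReal.ofReal c * ENNReal.ofReal (t ^ (-s))) * w ^ (k + 1) := by
            have hx : 0 < t * A ^ ((((k:ℝ)) + 1) * α) := by positivity
            have h1 : Real.exp (-(t * A ^ ((((k:ℝ)) + 1) * α))) ≤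
                c * (t * A ^ ((((k:ℝ)) + 1) * α)) ^ (-s) := hcle _ hx
            have h2 : (t * A ^ ((((k:ℝ)) + 1) * α)) ^ (-s)
                = t ^ (-s) * (A ^ ((((k:ℝ)) + 1) * α)) ^ (-s) :=
              Real.mul_rpow (le_of_lt ht) (by positivity)
            have h3 : (A ^ ((((k:ℝ)) + 1) * α)) ^ (-s) = A ^ (-(((k:ℝ)) + 1) * (1 + ε)) := by
              rw [← Real.rpow_mul (le_of_lt hA0)]
              congr 1
              rw [mul_comm α s] at hαs
              calc ((((k:ℝ)) + 1) * α) * (-s) = -(((k:ℝ)) + 1) * (s * α) := by ring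
                _ = -(((k:ℝ)) + 1) * (1 + ε) := by rw [hαs]
            have h4 : A ^ (((k:ℝ)) + 1) * A ^ (-(((k:ℝ)) + 1) * (1 + ε))
                = (A ^ (-ε)) ^ (k + 1) := by
              rw [← Real.rpow_add hA0, ← Real.rpow_natCast (A ^ (-ε)) (k + 1),
                ← Real.rpow_mul (le_of_lt hA0)]
              congr 1
              push_cast
              ring
            calc ENNReal.ofReal (Real.exp (-(t * A ^ ((((k:ℝ)) + 1) * α)))) *
                  ENNReal.ofReal (A ^ (((k:ℝ)) + 1))
                ≤ ENNReal.ofReal (c * (t ^ (-s) * A ^ (-(((k:ℝ)) + 1) * (1 + ε)))) *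
                  ENNReal.ofReal (A ^ (((k:ℝ)) + 1)) := by
                  apply mul_le_mul_left
                  apply ENNReal.ofReal_le_ofReal
                  rw [← h3, ← h2]
                  exact h1
              _ = (ENNReal.ofReal c * ENNReal.ofReal (t ^ (-s))) * w ^ (k + 1) := by
                  rw [hw, ← ENNReal.ofReal_pow (by positivity), ← h4]
                  rw [← ENNReal.ofReal_mul (by positivity), ← ENNReal.ofReal_mul (by positivity),
                    ← ENNReal.ofReal_mul (by positivity)]
                  congr 1
                  ring
    calc ∑' k : ℕ, ∫⁻ ξ in B p (0 + 1 + (k:ℤ)) \ B p (0 + (k:ℤ)),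
          ENNReal.ofReal (Real.exp (-t * ‖ξ‖ ^ α)) ∂μ
        ≤ ∑' k : ℕ, (ENNReal.ofReal c * ENNReal.ofReal (t ^ (-s))) * w ^ (k + 1) :=
          ENNReal.tsum_le_tsum hterm
      _ = (ENNReal.ofReal c * ENNReal.ofReal (t ^ (-s))) * ∑' k : ℕ, w ^ (k + 1) :=
          ENNReal.tsum_mul_left
      _ ≤ (ENNReal.ofReal c * ENNReal.ofReal (t ^ (-s))) * (1 - w)⁻¹ := by
          apply mul_le_mul_right
          refine le_trans (ENNReal.tsum_le_tsum fun k => ?_) (le_of_eq (ENNReal.tsum_geometric w))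
          exact pow_le_pow_of_le_one (by positivity) (le_of_lt hwlt) (by omega)
      _ = (ENNReal.ofReal c * (1 - w)⁻¹) * ENNReal.ofReal (t ^ (-s)) := by ring
  calc ∫⁻ ξ, ENNReal.ofReal (Real.exp (-t * ‖ξ‖ ^ α)) ∂μ
      ≤ (∫⁻ ξ in B p 0, ENNReal.ofReal (Real.exp (-t * ‖ξ‖ ^ α)) ∂μ) +
        ∫⁻ ξ in (B p 0)ᶜ, ENNReal.ofReal (Real.exp (-t * ‖ξ‖ ^ α)) ∂μ := hdecomp
    _ ≤ 1 + (ENNReal.ofReal c * (1 - w)⁻¹) * ENNReal.ofReal (t ^ (-s)) :=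
        add_le_add hball hcompl


section Pfacts

variable {χ : ℚ_[p] → ℂ} {α : ℝ}

lemma norm_chi_exp (hχnorm : ∀ a, ‖χ a‖ = 1) (a : ℚ_[p]) (u : ℝ) :
    ‖χ a * (Real.exp u : ℂ)‖ = Real.exp u := by
  rw [norm_mul, hχnorm, one_mul, Complex.norm_real, Real.norm_eq_abs,
    abs_of_pos (Real.exp_pos u)]

lemma nnnorm_chi_exp (hχnorm : ∀ a, ‖χ a‖ = 1) (a : ℚ_[p]) (u : ℝ) :
    (‖χ a * (Real.exp u : ℂ)‖₊ : ℝ≥0∞) = ENNReal.ofReal (Real.exp u) := by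
  rw [show ((‖χ a * (Real.exp u : ℂ)‖₊ : ℝ≥0∞)) = ENNReal.ofReal ‖χ a * (Real.exp u : ℂ)‖ from (ofReal_norm_eq_enorm _).symm, norm_chi_exp hχnorm]

lemma measurable_f (hχmeas : Measurable χ) (t : ℝ) (y : ℚ_[p]) :
    Measurable (fun ξ : ℚ_[p] => χ (-(y * ξ)) * (Real.exp (-t * ‖ξ‖ ^ α) : ℂ)) := by
  apply Measurable.mul
  · exact hχmeas.comp (by fun_prop)
  · fun_prop

lemma integrable_f (hμ : μ {x : ℚ_[p] | ‖x‖ ≤ 1} = 1)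
    (hχmeas : Measurable χ) (hχnorm : ∀ a, ‖χ a‖ = 1) (hα : 1 ≤ α)
    {t : ℝ} (ht : 0 < t) (y : ℚ_[p]) :
    Integrable (fun ξ : ℚ_[p] => χ (-(y * ξ)) * (Real.exp (-t * ‖ξ‖ ^ α) : ℂ)) μ := by
  obtain ⟨D, hD, hbound⟩ := lintegral_exp_bound hμ hα (ε := 1) one_pos
  refine ⟨(measurable_f hχmeas t y).aestronglyMeasurable, ?_⟩
  show ∫⁻ ξ, ‖χ (-(y * ξ)) * (Real.exp (-t * ‖ξ‖ ^ α) : ℂ)‖₊ ∂μ < ⊤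
  calc ∫⁻ ξ, (‖χ (-(y * ξ)) * (Real.exp (-t * ‖ξ‖ ^ α) : ℂ)‖₊ : ℝ≥0∞) ∂μ
      = ∫⁻ ξ, ENNReal.ofReal (Real.exp (-t * ‖ξ‖ ^ α)) ∂μ := by
        congr 1
        funext ξ
        exact nnnorm_chi_exp hχnorm _ _
    _ ≤ 1 + D * ENNReal.ofReal (t ^ (-((1 + 1) / α))) := hbound t ht
    _ < ⊤ := by
        apply ENNReal.add_lt_top.2
        exact ⟨ENNReal.one_lt_top, ENNReal.mul_lt_top hD.lt_top ENNReal.ofReal_lt_top⟩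

lemma ofReal_re_le (hχnorm : ∀ a, ‖χ a‖ = 1) (t : ℝ) (y : ℚ_[p]) :
    ENNReal.ofReal ((∫ ξ, χ (-(y * ξ)) * (Real.exp (-t * ‖ξ‖ ^ α) : ℂ) ∂μ).re) ≤
      ∫⁻ ξ, ENNReal.ofReal (Real.exp (-t * ‖ξ‖ ^ α)) ∂μ := by
  calc ENNReal.ofReal ((∫ ξ, χ (-(y * ξ)) * (Real.exp (-t * ‖ξ‖ ^ α) : ℂ) ∂μ).re)
      ≤ ENNReal.ofReal ‖∫ ξ, χ (-(y * ξ)) * (Real.exp (-t * ‖ξ‖ ^ α) : ℂ) ∂μ‖ := by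
        apply ENNReal.ofReal_le_ofReal
        exact Complex.re_le_norm _
    _ = (‖∫ ξ, χ (-(y * ξ)) * (Real.exp (-t * ‖ξ‖ ^ α) : ℂ) ∂μ‖₊ : ℝ≥0∞) :=
        ofReal_norm_eq_enorm _
    _ ≤ ∫⁻ ξ, (‖χ (-(y * ξ)) * (Real.exp (-t * ‖ξ‖ ^ α) : ℂ)‖₊ : ℝ≥0∞) ∂μ :=
        enorm_integral_le_lintegral_enorm _
    _ = ∫⁻ ξ, ENNReal.ofReal (Real.exp (-t * ‖ξ‖ ^ α)) ∂μ := by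
        congr 1
        funext ξ
        exact nnnorm_chi_exp hχnorm _ _

lemma integrableOn_char (hχmeas : Measurable χ) (hχnorm : ∀ a, ‖χ a‖ = 1)
    (hμ : μ {x : ℚ_[p] | ‖x‖ ≤ 1} = 1) (y : ℚ_[p]) (r : ℤ) :
    IntegrableOn (fun ξ : ℚ_[p] => χ (-(y * ξ))) (B p r) μ := by
  refine Integrable.mono' (g := fun _ => (1:ℝ)) ?_ ?_ ?_
  · exact integrableOn_const (lt_of_le_of_lt (measure_B_le hμ r)
      ENNReal.ofReal_lt_top).ne
  · exact (hχmeas.comp (by fun_prop)).aestronglyMeasurable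
  · exact Filter.Eventually.of_forall fun ξ => le_of_eq (hχnorm _)

lemma re_integral_le_stepD (hμ : μ {x : ℚ_[p] | ‖x‖ ≤ 1} = 1)
    (hχmeas : Measurable χ) (hχnorm : ∀ a, ‖χ a‖ = 1)
    (hχadd : ∀ a b, χ (a + b) = χ a * χ b) (hχtriv : χ 0 = 1)
    (hχnontriv : ∀ a : ℚ_[p], 1 < ‖a‖ → χ a ≠ 1)
    (hα : 1 ≤ α) {t : ℝ} (ht : 0 < t) {y : ℚ_[p]} {r : ℤ} (hr : 0 ≤ r)
    (hynorm : ‖y‖ = (p : ℝ) ^ (-r)) :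
    (∫ ξ, χ (-(y * ξ)) * (Real.exp (-t * ‖ξ‖ ^ α) : ℂ) ∂μ).re ≤
      t * ((p : ℝ) ^ (r + 1)) ^ (1 + α) := by
  have hα0 : (0:ℝ) < α := lt_of_lt_of_le one_pos hα
  set f : ℚ_[p] → ℂ := fun ξ => χ (-(y * ξ)) * (Real.exp (-t * ‖ξ‖ ^ α) : ℂ) with hf
  have hfi : Integrable f μ := integrable_f hμ hχmeas hχnorm hα ht y
  have hchar : ∀ a : ℤ, r + 1 ≤ a → ∫ ξ in B p a, χ (-(y * ξ)) ∂μ = 0 := by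
    intro a ha
    refine integral_char_ball χ hχadd hχtriv hχnontriv y a ?_
    rw [hynorm, ← zpow_add₀ hpne]
    exact one_lt_zpow₀ hp1 (by omega)
  -- tail vanishes
  have htail : ∫ ξ in (B p (r + 1))ᶜ, f ξ ∂μ = 0 := by
    rw [iUnion_shells (r := r + 1)]
    rw [integral_iUnion (fun k => (measurableSet_B _).diff (measurableSet_B _))
      shells_disjoint (by rw [← iUnion_shells]; exact hfi.integrableOn)]
    have hzero : ∀ k : ℕ,
        ∫ ξ in B p (r + 1 + 1 + (k:ℤ)) \ B p (r + 1 + (k:ℤ)), f ξ ∂μ = 0 := by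
      intro k
      set a : ℤ := r + 1 + (k:ℤ) with ha
      have hidx : r + 1 + 1 + (k:ℤ) = a + 1 := by omega
      rw [hidx]
      set C : ℂ := (Real.exp (-t * ((p:ℝ) ^ (a + 1)) ^ α) : ℂ) with hC
      have hcong : Set.EqOn f (fun ξ => χ (-(y * ξ)) * C) (B p (a+1) \ B p a) := by
        intro ξ hξ
        simp only [hf, hC]
        congr 3
        rw [norm_shell hξ]
      rw [setIntegral_congr_fun ((measurableSet_B _).diff (measurableSet_B _)) hcong]
      rw [integral_mul_const]
      have hdiff : ∫ ξ in B p (a+1) \ B p a, χ (-(y * ξ)) ∂μ = 0 := by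
        rw [integral_diff (measurableSet_B a)
          (integrableOn_char hχmeas hχnorm hμ y (a+1)) (B_mono (by omega))]
        rw [hchar (a+1) (by omega), hchar a (by omega), sub_zero]
      rw [hdiff, zero_mul]
    simp only [hzero, tsum_zero]
  have hsplit : ∫ ξ, f ξ ∂μ = ∫ ξ in B p (r + 1), f ξ ∂μ := by
    rw [← integral_add_compl (measurableSet_B (r+1)) hfi, htail, add_zero]
  -- subtract constant
  set c : ℝ := Real.exp (-t * ((p:ℝ) ^ (r + 1)) ^ α) with hc
  have hzeroB : ∫ ξ in B p (r + 1), χ (-(y * ξ)) * (c : ℂ) ∂μ = 0 := by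
    rw [integral_mul_const, hchar (r+1) (le_refl _), zero_mul]
  have hsub : ∫ ξ in B p (r + 1), f ξ ∂μ =
      ∫ ξ in B p (r + 1), χ (-(y * ξ)) * ((Real.exp (-t * ‖ξ‖ ^ α) - c : ℝ) : ℂ) ∂μ := by
    have heq : ∀ ξ : ℚ_[p], χ (-(y * ξ)) * ((Real.exp (-t * ‖ξ‖ ^ α) - c : ℝ) : ℂ)
        = f ξ - χ (-(y * ξ)) * (c : ℂ) := by
      intro ξ
      simp only [hf]
      push_cast
      ring
    rw [integral_congr_ae (Filter.Eventually.of_forall fun ξ => heq ξ)]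
    rw [integral_sub hfi.integrableOn
      ((integrableOn_char hχmeas hχnorm hμ y (r+1)).mul_const _)]
    rw [hzeroB, sub_zero]
  -- bound
  have hbnd : ‖∫ ξ in B p (r + 1), χ (-(y * ξ)) * ((Real.exp (-t * ‖ξ‖ ^ α) - c : ℝ) : ℂ) ∂μ‖
      ≤ (t * ((p:ℝ) ^ (r + 1)) ^ α) * (μ (B p (r+1))).toReal := by
    refine norm_setIntegral_le_of_norm_le_const
      (lt_of_le_of_lt (measure_B_le hμ _) ENNReal.ofReal_lt_top) (fun ξ hξ => ?_)
    · have hEc : Real.exp (-t * ‖ξ‖ ^ α) - c ≥ 0 := by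
        have hmono : Real.exp (-t * ((p:ℝ) ^ (r + 1)) ^ α) ≤ Real.exp (-t * ‖ξ‖ ^ α) := by
          apply Real.exp_le_exp.2
          have : ‖ξ‖ ^ α ≤ ((p:ℝ) ^ (r + 1)) ^ α :=
            Real.rpow_le_rpow (norm_nonneg ξ) hξ (le_of_lt hα0)
          nlinarith
        rw [hc]
        linarith
      have hEc2 : Real.exp (-t * ‖ξ‖ ^ α) - c ≤ t * ((p:ℝ) ^ (r + 1)) ^ α := by
        have h1 : Real.exp (-(t * ‖ξ‖ ^ α)) - Real.exp (-(t * ((p:ℝ) ^ (r + 1)) ^ α))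
            ≤ t * ((p:ℝ) ^ (r + 1)) ^ α - t * ‖ξ‖ ^ α := by
          apply exp_sub_exp_le
          · positivity
          · have : ‖ξ‖ ^ α ≤ ((p:ℝ) ^ (r + 1)) ^ α :=
              Real.rpow_le_rpow (norm_nonneg ξ) hξ (le_of_lt hα0)
            nlinarith
        have h2 : 0 ≤ t * ‖ξ‖ ^ α := by positivity
        rw [hc]
        rw [show -t * ‖ξ‖ ^ α = -(t * ‖ξ‖ ^ α) by ring,
          show -t * ((p:ℝ) ^ (r + 1)) ^ α = -(t * ((p:ℝ) ^ (r + 1)) ^ α) by ring]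
        linarith
      calc ‖χ (-(y * ξ)) * ((Real.exp (-t * ‖ξ‖ ^ α) - c : ℝ) : ℂ)‖
          = |Real.exp (-t * ‖ξ‖ ^ α) - c| := by
            rw [norm_mul, hχnorm, one_mul, Complex.norm_real, Real.norm_eq_abs]
        _ = Real.exp (-t * ‖ξ‖ ^ α) - c := abs_of_nonneg hEc
        _ ≤ t * ((p:ℝ) ^ (r + 1)) ^ α := hEc2
  have htoReal : (μ (B p (r+1))).toReal ≤ (p:ℝ) ^ (r+1) :=
    ENNReal.toReal_le_of_le_ofReal (le_of_lt (zpow_pos hp0 _)) (measure_B_le hμ _)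
  calc (∫ ξ, f ξ ∂μ).re
      = (∫ ξ in B p (r + 1), χ (-(y * ξ)) * ((Real.exp (-t * ‖ξ‖ ^ α) - c : ℝ) : ℂ) ∂μ).re := by
        rw [hsplit, hsub]
    _ ≤ ‖∫ ξ in B p (r + 1), χ (-(y * ξ)) * ((Real.exp (-t * ‖ξ‖ ^ α) - c : ℝ) : ℂ) ∂μ‖ := by
        exact Complex.re_le_norm _
    _ ≤ (t * ((p:ℝ) ^ (r + 1)) ^ α) * (μ (B p (r+1))).toReal := hbnd
    _ ≤ (t * ((p:ℝ) ^ (r + 1)) ^ α) * ((p:ℝ) ^ (r+1)) := by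
        apply mul_le_mul_of_nonneg_left htoReal
        positivity
    _ = t * ((p : ℝ) ^ (r + 1)) ^ (1 + α) := by
        rw [Real.rpow_add (zpow_pos hp0 _), Real.rpow_one]
        ring

end Pfacts


lemma measure_singleton_zero (hμ : μ {x : ℚ_[p] | ‖x‖ ≤ 1} = 1) :
    μ ({0} : Set ℚ_[p]) = 0 := by
  have h : ∀ m : ℕ, μ ({0} : Set ℚ_[p]) ≤ (ENNReal.ofReal ((p:ℝ)⁻¹)) ^ m := by
    intro m
    have h1 : ({0} : Set ℚ_[p]) ⊆ B p (-(m:ℤ)) := by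
      intro x hx
      rw [Set.mem_singleton_iff] at hx
      subst hx
      exact zero_mem_B _
    refine le_trans (measure_mono h1) (le_trans (measure_B_le hμ _) (le_of_eq ?_))
    rw [zpow_neg, zpow_natCast, ← inv_pow, ENNReal.ofReal_pow (by positivity)]
  have htend : Filter.Tendsto (fun m : ℕ => (ENNReal.ofReal ((p:ℝ)⁻¹)) ^ m)
      Filter.atTop (nhds 0) := by
    apply ENNReal.tendsto_pow_atTop_nhds_zero_of_lt_one
    refine ENNReal.ofReal_lt_one.2 ?_
    rw [inv_lt_one_iff₀]
    right
    exact hp1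
  have := ge_of_tendsto htend (Filter.Eventually.of_forall h)
  simpa using this

lemma lintegral_norm_neg_half (hμ : μ {x : ℚ_[p] | ‖x‖ ≤ 1} = 1) :
    ∫⁻ y in {y : ℚ_[p] | ‖y‖ ≤ 1}, (‖y‖₊ : ℝ≥0∞) ^ (-(1/2 : ℝ)) ∂μ < ⊤ := by
  have hcover : {y : ℚ_[p] | ‖y‖ ≤ 1} ⊆
      {(0 : ℚ_[p])} ∪ ⋃ m : ℕ, (B p (-(m:ℤ)) \ B p (-((m:ℤ)+1))) := by
    intro y hy
    by_cases hy0 : y = 0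
    · exact Or.inl (by simp [hy0])
    · right
      have hv : 0 ≤ y.valuation := (Padic.norm_le_one_iff_val_nonneg y).1 hy
      have hval := Padic.norm_eq_zpow_neg_valuation hy0
      refine Set.mem_iUnion.2 ⟨y.valuation.toNat, ?_, ?_⟩
      · rw [mem_B_iff, hval]
        apply zpow_le_zpow_right₀ (le_of_lt hp1)
        omega
      · rw [mem_B_iff, hval]
        intro hc
        have := (zpow_le_zpow_iff_right₀ (hp1 (p := p))).1 hc
        omega
  have hsplit : ∫⁻ y in {y : ℚ_[p] | ‖y‖ ≤ 1}, (‖y‖₊ : ℝ≥0∞) ^ (-(1/2 : ℝ)) ∂μ ≤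
      (∫⁻ y in {(0 : ℚ_[p])}, (‖y‖₊ : ℝ≥0∞) ^ (-(1/2 : ℝ)) ∂μ) +
      ∫⁻ y in ⋃ m : ℕ, (B p (-(m:ℤ)) \ B p (-((m:ℤ)+1))),
        (‖y‖₊ : ℝ≥0∞) ^ (-(1/2 : ℝ)) ∂μ :=
    le_trans (lintegral_mono_set hcover) (lintegral_union_le _ _ _)
  have hzero : ∫⁻ y in {(0 : ℚ_[p])}, (‖y‖₊ : ℝ≥0∞) ^ (-(1/2 : ℝ)) ∂μ = 0 :=
    setLIntegral_measure_zero _ _ (measure_singleton_zero hμ)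
  have hshellbound : ∀ m : ℕ,
      ∫⁻ y in B p (-(m:ℤ)) \ B p (-((m:ℤ)+1)), (‖y‖₊ : ℝ≥0∞) ^ (-(1/2 : ℝ)) ∂μ ≤
      ENNReal.ofReal ((p:ℝ) ^ ((1:ℝ)/2)) * (ENNReal.ofReal ((p:ℝ) ^ (-(1:ℝ)/2))) ^ m := by
    intro m
    have hpt : ∀ y ∈ B p (-(m:ℤ)) \ B p (-((m:ℤ)+1)),
        (‖y‖₊ : ℝ≥0∞) ^ (-(1/2 : ℝ)) ≤
          ENNReal.ofReal ((p:ℝ) ^ (((m:ℝ)+1)/2)) := by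
      rintro y ⟨hy1, hy2⟩
      have hygt : (p:ℝ) ^ (-((m:ℤ)+1)) < ‖y‖ := lt_of_not_ge hy2
      have hypos : (0:ℝ) < ‖y‖ := lt_trans (zpow_pos hp0 _) hygt
      have h1 : (‖y‖₊ : ℝ≥0∞) ^ (-(1/2 : ℝ)) = ENNReal.ofReal (‖y‖ ^ (-(1/2 : ℝ))) := by
        rw [show ((‖y‖₊ : ℝ≥0∞)) = ENNReal.ofReal ‖y‖ from (ofReal_norm_eq_enorm y).symm, ENNReal.ofReal_rpow_of_pos hypos]
      rw [h1]
      apply ENNReal.ofReal_le_ofReal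
      have h2 : ‖y‖ ^ (-(1/2 : ℝ)) ≤ ((p:ℝ) ^ (-((m:ℤ)+1))) ^ (-(1/2 : ℝ)) := by
        rw [Real.rpow_neg (le_of_lt hypos), Real.rpow_neg (le_of_lt (zpow_pos hp0 _))]
        apply inv_anti₀
        · exact Real.rpow_pos_of_pos (zpow_pos hp0 _) _
        · exact Real.rpow_le_rpow (le_of_lt (zpow_pos hp0 _)) (le_of_lt hygt) (by norm_num)
      refine le_trans h2 (le_of_eq ?_)
      rw [← Real.rpow_intCast (p:ℝ) (-((m:ℤ)+1)), ← Real.rpow_mul (le_of_lt hp0)]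
      congr 1
      push_cast
      ring
    calc ∫⁻ y in B p (-(m:ℤ)) \ B p (-((m:ℤ)+1)), (‖y‖₊ : ℝ≥0∞) ^ (-(1/2 : ℝ)) ∂μ
        ≤ ∫⁻ _ in B p (-(m:ℤ)) \ B p (-((m:ℤ)+1)),
            ENNReal.ofReal ((p:ℝ) ^ (((m:ℝ)+1)/2)) ∂μ :=
          setLIntegral_mono measurable_const hpt
      _ = ENNReal.ofReal ((p:ℝ) ^ (((m:ℝ)+1)/2)) * μ (B p (-(m:ℤ)) \ B p (-((m:ℤ)+1))) :=
          setLIntegral_const _ _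
      _ ≤ ENNReal.ofReal ((p:ℝ) ^ (((m:ℝ)+1)/2)) * ENNReal.ofReal ((p:ℝ) ^ (-(m:ℤ))) := by
          apply mul_le_mul_right
          exact le_trans (measure_mono Set.diff_subset) (measure_B_le hμ _)
      _ = ENNReal.ofReal ((p:ℝ) ^ ((1:ℝ)/2)) * (ENNReal.ofReal ((p:ℝ) ^ (-(1:ℝ)/2))) ^ m := by
          rw [← ENNReal.ofReal_pow (by positivity), ← ENNReal.ofReal_mul (by positivity),
            ← ENNReal.ofReal_mul (by positivity)]
          congr 1
          rw [← Real.rpow_intCast (p:ℝ) (-(m:ℤ)), ← Real.rpow_add hp0,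
            ← Real.rpow_natCast ((p:ℝ) ^ (-(1:ℝ)/2)) m, ← Real.rpow_mul (le_of_lt hp0),
            ← Real.rpow_add hp0]
          congr 1
          push_cast
          ring
  have hw2 : ENNReal.ofReal ((p:ℝ) ^ (-(1:ℝ)/2)) < 1 := by
    refine ENNReal.ofReal_lt_one.2 ?_
    apply Real.rpow_lt_one_of_one_lt_of_neg hp1
    norm_num
  have hwne2 : (1 : ℝ≥0∞) - ENNReal.ofReal ((p:ℝ) ^ (-(1:ℝ)/2)) ≠ 0 := by
    intro hcon
    exact absurd (tsub_eq_zero_iff_le.1 hcon) (not_le.2 hw2)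
  calc ∫⁻ y in {y : ℚ_[p] | ‖y‖ ≤ 1}, (‖y‖₊ : ℝ≥0∞) ^ (-(1/2 : ℝ)) ∂μ
      ≤ (∫⁻ y in {(0 : ℚ_[p])}, (‖y‖₊ : ℝ≥0∞) ^ (-(1/2 : ℝ)) ∂μ) +
        ∫⁻ y in ⋃ m : ℕ, (B p (-(m:ℤ)) \ B p (-((m:ℤ)+1))),
          (‖y‖₊ : ℝ≥0∞) ^ (-(1/2 : ℝ)) ∂μ := hsplit
    _ = ∫⁻ y in ⋃ m : ℕ, (B p (-(m:ℤ)) \ B p (-((m:ℤ)+1))),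
          (‖y‖₊ : ℝ≥0∞) ^ (-(1/2 : ℝ)) ∂μ := by rw [hzero, zero_add]
    _ = ∑' m : ℕ, ∫⁻ y in B p (-(m:ℤ)) \ B p (-((m:ℤ)+1)),
          (‖y‖₊ : ℝ≥0∞) ^ (-(1/2 : ℝ)) ∂μ := by
        apply lintegral_iUnion (fun m => (measurableSet_B _).diff (measurableSet_B _))
        have key : ∀ i j : ℕ, i < j →
            Disjoint (B p (-(i:ℤ)) \ B p (-((i:ℤ)+1))) (B p (-(j:ℤ)) \ B p (-((j:ℤ)+1))) := by
          intro i j hij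
          rw [Set.disjoint_left]
          rintro ξ ⟨-, h2⟩ ⟨h3, -⟩
          exact h2 (B_mono (by omega) h3)
        intro i j hij
        rcases hij.lt_or_gt with h | h
        · exact key i j h
        · exact (key j i h).symm
    _ ≤ ∑' m : ℕ, ENNReal.ofReal ((p:ℝ) ^ ((1:ℝ)/2)) * (ENNReal.ofReal ((p:ℝ) ^ (-(1:ℝ)/2))) ^ m :=
        ENNReal.tsum_le_tsum hshellbound
    _ = ENNReal.ofReal ((p:ℝ) ^ ((1:ℝ)/2)) *
        (1 - ENNReal.ofReal ((p:ℝ) ^ (-(1:ℝ)/2)))⁻¹ := by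
        rw [ENNReal.tsum_mul_left, ENNReal.tsum_geometric]
    _ < ⊤ := ENNReal.mul_lt_top ENNReal.ofReal_lt_top (ENNReal.inv_lt_top.2 ?_)
  exact pos_iff_ne_zero.2 hwne2


section TimeBound

variable {χ : ℚ_[p] → ℂ} {α : ℝ}

lemma time_integral_bound (hμ : μ {x : ℚ_[p] | ‖x‖ ≤ 1} = 1)
    (hχmeas : Measurable χ) (hχnorm : ∀ a, ‖χ a‖ = 1)
    (hχadd : ∀ a b, χ (a + b) = χ a * χ b) (hχtriv : χ 0 = 1)
    (hχnontriv : ∀ a : ℚ_[p], 1 < ‖a‖ → χ a ≠ 1)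
    (hα : 1 ≤ α) {ε : ℝ} (hε : 0 < ε) (T : ℝ) (hT : 0 < T) :
    ∃ K : ℝ≥0∞, K ≠ ⊤ ∧ ∀ y : ℚ_[p], ‖y‖ ≤ 1 →
      (∫⁻ t in Set.Ioc (0:ℝ) T,
        ENNReal.ofReal ((∫ ξ, χ (-(y * ξ)) * (Real.exp (-t * ‖ξ‖ ^ α) : ℂ) ∂μ).re))
      ≤ K * (‖y‖₊ : ℝ≥0∞) ^ (-(α * ε)) := by
  have hα0 : (0:ℝ) < α := lt_of_lt_of_le one_pos hα
  obtain ⟨D, hD, hE⟩ := lintegral_exp_bound hμ hα hε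
  set s : ℝ := (1 + ε) / α with hsdef
  have hs0 : 0 < s := by positivity
  have hs_le : s ≤ 1 + ε := by
    rw [hsdef, div_le_iff₀ hα0]
    nlinarith
  set S : ℝ := max T 1 with hS
  have hS1 : (1:ℝ) ≤ S := le_max_right _ _
  have hTS : T ≤ S := le_max_left _ _
  have hS0 : (0:ℝ) < S := lt_of_lt_of_le one_pos hS1
  set K : ℝ≥0∞ := ENNReal.ofReal ((p:ℝ) ^ (1 + α)) + ENNReal.ofReal S +
    D * ENNReal.ofReal (S ^ (1 + ε)) * ENNReal.ofReal (1 / ε) with hK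
  have hKne : K ≠ ⊤ := by
    rw [hK]
    refine ENNReal.add_ne_top.2 ⟨ENNReal.add_ne_top.2 ⟨ENNReal.ofReal_ne_top,
      ENNReal.ofReal_ne_top⟩, ?_⟩
    exact ENNReal.mul_ne_top (ENNReal.mul_ne_top hD ENNReal.ofReal_ne_top)
      ENNReal.ofReal_ne_top
  have hK0 : K ≠ 0 := by
    rw [hK]
    intro hc
    rw [add_eq_zero, add_eq_zero] at hc
    have := hc.1.1
    rw [ENNReal.ofReal_eq_zero] at this
    have hpos : (0:ℝ) < (p:ℝ) ^ (1 + α) := Real.rpow_pos_of_pos hp0 _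
    linarith
  refine ⟨K, hKne, fun y hy => ?_⟩
  by_cases hy0 : y = 0
  · subst hy0
    have : ((‖(0:ℚ_[p])‖₊ : ℝ≥0∞)) ^ (-(α * ε)) = ⊤ := by
      rw [nnnorm_zero, ENNReal.coe_zero]
      exact ENNReal.zero_rpow_of_neg (by nlinarith)
    rw [this, ENNReal.mul_top hK0]
    exact le_top
  -- now y ≠ 0
  have hynormpos : (0:ℝ) < ‖y‖ := norm_pos_iff.2 hy0
  set r : ℤ := y.valuation with hrdef
  have hr : 0 ≤ r := (Padic.norm_le_one_iff_val_nonneg y).1 hy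
  have hynorm : ‖y‖ = (p:ℝ) ^ (-r) := Padic.norm_eq_zpow_neg_valuation hy0
  set τ : ℝ := ‖y‖ ^ α with hτdef
  have hτ0 : 0 < τ := Real.rpow_pos_of_pos hynormpos α
  have hτ1 : τ ≤ 1 := Real.rpow_le_one (norm_nonneg y) hy (le_of_lt hα0)
  have hτS : τ ≤ S := le_trans hτ1 hS1
  set X : ℝ≥0∞ := (‖y‖₊ : ℝ≥0∞) ^ (-(α * ε)) with hX
  have hXeq : X = ENNReal.ofReal (τ ^ (-ε)) := by
    rw [hX, show ((‖y‖₊ : ℝ≥0∞)) = ENNReal.ofReal ‖y‖ from (ofReal_norm_eq_enorm y).symm, ENNReal.ofReal_rpow_of_pos hynormpos]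
    congr 1
    rw [hτdef, ← Real.rpow_mul (norm_nonneg y)]
    congr 1
    ring
  have hX1 : (1:ℝ≥0∞) ≤ X := by
    rw [hXeq, show (1:ℝ≥0∞) = ENNReal.ofReal 1 by simp]
    apply ENNReal.ofReal_le_ofReal
    exact Real.one_le_rpow_of_pos_of_le_one_of_nonpos hτ0 hτ1 (by linarith)
  -- split the time interval
  have hsubset : Set.Ioc (0:ℝ) T ⊆ Set.Ioc (0:ℝ) τ ∪ Set.Ioc τ S := by
    intro t ht
    rcases le_or_gt t τ with h | h
    · exact Or.inl ⟨ht.1, h⟩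
    · exact Or.inr ⟨h, le_trans ht.2 hTS⟩
  have hsplit : (∫⁻ t in Set.Ioc (0:ℝ) T,
      ENNReal.ofReal ((∫ ξ, χ (-(y * ξ)) * (Real.exp (-t * ‖ξ‖ ^ α) : ℂ) ∂μ).re)) ≤
      (∫⁻ t in Set.Ioc (0:ℝ) τ,
        ENNReal.ofReal ((∫ ξ, χ (-(y * ξ)) * (Real.exp (-t * ‖ξ‖ ^ α) : ℂ) ∂μ).re)) +
      (∫⁻ t in Set.Ioc τ S,
        ENNReal.ofReal ((∫ ξ, χ (-(y * ξ)) * (Real.exp (-t * ‖ξ‖ ^ α) : ℂ) ∂μ).re)) :=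
    le_trans (lintegral_mono_set hsubset) (lintegral_union_le _ _ _)
  -- part 1
  have hpart1 : (∫⁻ t in Set.Ioc (0:ℝ) τ,
      ENNReal.ofReal ((∫ ξ, χ (-(y * ξ)) * (Real.exp (-t * ‖ξ‖ ^ α) : ℂ) ∂μ).re)) ≤
      ENNReal.ofReal ((p:ℝ) ^ (1 + α)) := by
    have hpt : ∀ t ∈ Set.Ioc (0:ℝ) τ,
        ENNReal.ofReal ((∫ ξ, χ (-(y * ξ)) * (Real.exp (-t * ‖ξ‖ ^ α) : ℂ) ∂μ).re) ≤
        ENNReal.ofReal (τ * ((p:ℝ) ^ (r + 1)) ^ (1 + α)) := by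
      intro t ht
      apply ENNReal.ofReal_le_ofReal
      refine le_trans (re_integral_le_stepD hμ hχmeas hχnorm hχadd hχtriv hχnontriv
        hα ht.1 hr hynorm) ?_
      apply mul_le_mul_of_nonneg_right ht.2
      positivity
    calc (∫⁻ t in Set.Ioc (0:ℝ) τ,
          ENNReal.ofReal ((∫ ξ, χ (-(y * ξ)) * (Real.exp (-t * ‖ξ‖ ^ α) : ℂ) ∂μ).re))
        ≤ ∫⁻ _ in Set.Ioc (0:ℝ) τ, ENNReal.ofReal (τ * ((p:ℝ) ^ (r + 1)) ^ (1 + α)) := by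
          exact setLIntegral_mono measurable_const hpt
      _ = ENNReal.ofReal (τ * ((p:ℝ) ^ (r + 1)) ^ (1 + α)) * volume (Set.Ioc (0:ℝ) τ) :=
          setLIntegral_const _ _
      _ = ENNReal.ofReal (τ * ((p:ℝ) ^ (r + 1)) ^ (1 + α)) * ENNReal.ofReal τ := by
          rw [Real.volume_Ioc, sub_zero]
      _ ≤ ENNReal.ofReal ((p:ℝ) ^ (1 + α)) := by
          rw [← ENNReal.ofReal_mul (by positivity)]
          apply ENNReal.ofReal_le_ofReal
          -- real inequality : τ * (p^(r+1))^(1+α) * τ ≤ p^(1+α)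
          have hτ_eq : τ = (p:ℝ) ^ (-(r:ℝ) * α) := by
            rw [hτdef, hynorm, ← Real.rpow_intCast (p:ℝ) (-r),
              ← Real.rpow_mul (le_of_lt hp0)]
            congr 1
            push_cast
            ring
          have hpr : ((p:ℝ) ^ (r + 1) : ℝ) = (p:ℝ) ^ ((r:ℝ) + 1) := by
            rw [← Real.rpow_intCast (p:ℝ) (r + 1)]
            congr 1
            push_cast
            ring
          rw [hτ_eq, hpr, ← Real.rpow_mul (le_of_lt hp0), ← Real.rpow_add hp0,
            ← Real.rpow_add hp0]
          apply Real.rpow_le_rpow_of_exponent_le (le_of_lt hp1)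
          have hrR : (0:ℝ) ≤ (r:ℝ) := by exact_mod_cast hr
          nlinarith [mul_nonneg hrR (by linarith : (0:ℝ) ≤ α - 1)]
  -- part 2
  have hpart2 : (∫⁻ t in Set.Ioc τ S,
      ENNReal.ofReal ((∫ ξ, χ (-(y * ξ)) * (Real.exp (-t * ‖ξ‖ ^ α) : ℂ) ∂μ).re)) ≤
      ENNReal.ofReal S + D * ENNReal.ofReal (S ^ (1 + ε)) *
        (ENNReal.ofReal (1/ε) * X) := by
    have hpt : ∀ t ∈ Set.Ioc τ S,
        ENNReal.ofReal ((∫ ξ, χ (-(y * ξ)) * (Real.exp (-t * ‖ξ‖ ^ α) : ℂ) ∂μ).re) ≤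
        1 + D * ENNReal.ofReal (S ^ (1 + ε)) * ENNReal.ofReal (t ^ (-(1+ε))) := by
      intro t ht
      have ht0 : 0 < t := lt_of_le_of_lt (le_of_lt hτ0) ht.1
      refine le_trans (ofReal_re_le hχnorm t y) (le_trans (hE t ht0) ?_)
      apply add_le_add le_rfl
      rw [mul_assoc]
      apply mul_le_mul_right
      rw [← ENNReal.ofReal_mul (by positivity)]
      apply ENNReal.ofReal_le_ofReal
      have h1 : t ^ (-s) = t ^ (-(1+ε)) * t ^ ((1+ε) - s) := by
        rw [← Real.rpow_add ht0]
        congr 1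
        ring
      rw [h1]
      rw [mul_comm (S ^ (1+ε)) (t ^ (-(1+ε)))]
      apply mul_le_mul_of_nonneg_left _ (Real.rpow_nonneg (le_of_lt ht0) _)
      calc t ^ ((1+ε) - s) ≤ S ^ ((1+ε) - s) :=
            Real.rpow_le_rpow (le_of_lt ht0) ht.2 (by linarith)
        _ ≤ S ^ (1+ε) := Real.rpow_le_rpow_of_exponent_le hS1 (by linarith)
    have hJ : (∫⁻ t in Set.Ioc τ S, ENNReal.ofReal (t ^ (-(1+ε)))) ≤
        ENNReal.ofReal (τ ^ (-ε) / ε) := by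
      have hii : IntervalIntegrable (fun t : ℝ => t ^ (-(1+ε))) volume τ S := by
        apply intervalIntegral.intervalIntegrable_rpow
        right
        rw [Set.uIcc_of_le hτS]
        intro hc
        exact absurd hc.1 (not_le.2 hτ0)
      have hint : ∫ t in Set.Ioc τ S, t ^ (-(1+ε)) ∂volume =
          (S ^ (-(1+ε) + 1) - τ ^ (-(1+ε) + 1)) / (-(1+ε) + 1) := by
        rw [← intervalIntegral.integral_of_le hτS]
        apply integral_rpow
        right
        constructor
        · intro hc
          have : (1+ε) = 1 := by linarith [neg_injective hc]
          linarith
        · rw [Set.uIcc_of_le hτS]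
          intro hc
          exact absurd hc.1 (not_le.2 hτ0)
      have heq : (∫⁻ t in Set.Ioc τ S, ENNReal.ofReal (t ^ (-(1+ε)))) =
          ENNReal.ofReal (∫ t in Set.Ioc τ S, t ^ (-(1+ε)) ∂volume) := by
        rw [ofReal_integral_eq_lintegral_ofReal hii.1]
        refine (ae_restrict_iff' measurableSet_Ioc).2
          (Filter.Eventually.of_forall fun t ht => Real.rpow_nonneg ?_ _)
        exact le_of_lt (lt_trans hτ0 ht.1)
      rw [heq, hint]
      apply ENNReal.ofReal_le_ofReal
      have hSe : 0 ≤ S ^ (-(1+ε) + 1) := Real.rpow_nonneg (le_of_lt hS0) _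
      have hτe : τ ^ (-(1+ε) + 1) = τ ^ (-ε) := by congr 1; ring
      rw [show (-(1+ε) + 1 : ℝ) = -ε by ring] at hSe ⊢
      have hflip : (S ^ (-ε) - τ ^ (-ε)) / (-ε) =
          (τ ^ (-ε) - S ^ (-ε)) / ε := by
        rw [div_neg, ← neg_div, neg_sub]
      rw [hflip]
      have h2 : τ ^ (-ε) - S ^ (-ε) ≤ τ ^ (-ε) := by linarith
      exact (div_le_div_iff_of_pos_right hε).2 h2
    have hmeasJ : Measurable (fun t : ℝ => ENNReal.ofReal (t ^ (-(1+ε)))) := by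
      fun_prop
    calc (∫⁻ t in Set.Ioc τ S,
          ENNReal.ofReal ((∫ ξ, χ (-(y * ξ)) * (Real.exp (-t * ‖ξ‖ ^ α) : ℂ) ∂μ).re))
        ≤ ∫⁻ t in Set.Ioc τ S,
            (1 + D * ENNReal.ofReal (S ^ (1 + ε)) * ENNReal.ofReal (t ^ (-(1+ε)))) := by
          refine setLIntegral_mono ?_ hpt
          exact measurable_const.add ((measurable_const.mul measurable_const).mul hmeasJ)
      _ = volume (Set.Ioc τ S) + D * ENNReal.ofReal (S ^ (1 + ε)) *
            ∫⁻ t in Set.Ioc τ S, ENNReal.ofReal (t ^ (-(1+ε))) := by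
          rw [lintegral_add_left measurable_const,
            lintegral_const_mul _ hmeasJ]
          congr 1
          rw [setLIntegral_const, one_mul]
      _ ≤ ENNReal.ofReal S + D * ENNReal.ofReal (S ^ (1 + ε)) *
            ENNReal.ofReal (τ ^ (-ε) / ε) := by
          apply add_le_add
          · rw [Real.volume_Ioc]
            apply ENNReal.ofReal_le_ofReal
            linarith
          · exact mul_le_mul_right hJ _
      _ = ENNReal.ofReal S + D * ENNReal.ofReal (S ^ (1 + ε)) *
            (ENNReal.ofReal (1/ε) * X) := by
          congr 1
          rw [hXeq, ← ENNReal.ofReal_mul (by positivity)]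
          congr 1
          field_simp
  -- combine
  calc (∫⁻ t in Set.Ioc (0:ℝ) T,
      ENNReal.ofReal ((∫ ξ, χ (-(y * ξ)) * (Real.exp (-t * ‖ξ‖ ^ α) : ℂ) ∂μ).re))
      ≤ ENNReal.ofReal ((p:ℝ) ^ (1 + α)) +
        (ENNReal.ofReal S + D * ENNReal.ofReal (S ^ (1 + ε)) *
          (ENNReal.ofReal (1/ε) * X)) :=
        le_trans hsplit (add_le_add hpart1 hpart2)
    _ ≤ K * X := by
        rw [hK, add_mul, add_mul]
        have h1 : ENNReal.ofReal ((p:ℝ) ^ (1 + α)) ≤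
            ENNReal.ofReal ((p:ℝ) ^ (1 + α)) * X := by
          calc ENNReal.ofReal ((p:ℝ) ^ (1 + α)) =
              ENNReal.ofReal ((p:ℝ) ^ (1 + α)) * 1 := (mul_one _).symm
            _ ≤ ENNReal.ofReal ((p:ℝ) ^ (1 + α)) * X := mul_le_mul_right hX1 _
        have h2 : ENNReal.ofReal S ≤ ENNReal.ofReal S * X := by
          calc ENNReal.ofReal S = ENNReal.ofReal S * 1 := (mul_one _).symm
            _ ≤ ENNReal.ofReal S * X := mul_le_mul_right hX1 _
        have h3 : D * ENNReal.ofReal (S ^ (1 + ε)) * (ENNReal.ofReal (1/ε) * X) =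
            D * ENNReal.ofReal (S ^ (1 + ε)) * ENNReal.ofReal (1/ε) * X := by ring
        rw [h3, ← add_assoc]
        exact add_le_add (add_le_add h1 h2) (le_refl _)

end TimeBound

end Stmt14Aux


open Stmt14Aux

set_option maxHeartbeats 1000000 in
theorem stmt14 (p : ℕ) [Fact p.Prime] [MeasurableSpace ℚ_[p]] [BorelSpace ℚ_[p]]
    (μ : Measure ℚ_[p]) [μ.IsAddHaarMeasure]
    (hμ : μ {x : ℚ_[p] | ‖x‖ ≤ 1} = 1)
    (χ : ℚ_[p] → ℂ) (hχmeas : Measurable χ)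
    (hχnorm : ∀ a, ‖χ a‖ = 1)
    (hχadd : ∀ a b, χ (a + b) = χ a * χ b)
    (hχtriv : ∀ a : ℚ_[p], ‖a‖ ≤ 1 → χ a = 1)
    (hχnontriv : ∀ a : ℚ_[p], 1 < ‖a‖ → χ a ≠ 1)
    (α lam : ℝ) (hα : 1 ≤ α) (hlam : α * (1 + α) < lam)
    (b : ℚ_[p] → ℚ_[p]) (hb : Measurable b) (x : ℚ_[p])
    (hint : ∫⁻ y in {y : ℚ_[p] | ‖y‖ ≤ 1},
      (‖b (x + y)‖₊ : ℝ≥0∞) ^ (-lam) ∂μ < ⊤)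
    (T : ℝ) (hT : 0 < T) :
    ∫⁻ t in Set.Ioc (0 : ℝ) T,
        ∫⁻ y in {y : ℚ_[p] | ‖y‖ ≤ 1},
          (‖b (x + y)‖₊ : ℝ≥0∞) ^ (-α) *
            ENNReal.ofReal
              ((∫ ξ : ℚ_[p], χ (-(y * ξ)) * (Real.exp (-t * ‖ξ‖ ^ α) : ℂ) ∂μ).re)
          ∂μ < ⊤ := by
  have hα0 : (0:ℝ) < α := lt_of_lt_of_le one_pos hα
  have hαlam : α < lam := by nlinarith
  set q' : ℝ := lam / α with hq'def
  have hq'1 : 1 < q' := (one_lt_div hα0).2 hαlam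
  have hcc : q'.HolderConjugate q'.conjExponent := Real.HolderConjugate.conjExponent hq'1
  set q : ℝ := q'.conjExponent with hqdef
  have hq1 : 1 < q := hcc.symm.lt
  have hq0 : (0:ℝ) < q := lt_trans one_pos hq1
  set ε : ℝ := 1 / (2 * q * α) with hεdef
  have hε : 0 < ε := by positivity
  have hαεq : (-(α * ε)) * q = -(1/2 : ℝ) := by
    rw [hεdef]
    field_simp
  obtain ⟨K, hKne, hKbd⟩ := time_integral_bound (μ := μ) hμ hχmeas hχnorm hχadd
    (hχtriv 0 (by simp)) hχnontriv hα hε T hT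
  -- measurability
  have hbmeas : Measurable (fun y : ℚ_[p] => b (x + y)) := hb.comp (measurable_const_add x)
  have hgmeas : Measurable (fun y : ℚ_[p] => (‖b (x + y)‖₊ : ℝ≥0∞) ^ (-α)) := by
    fun_prop
  have hXmeas : Measurable (fun y : ℚ_[p] => (‖y‖₊ : ℝ≥0∞) ^ (-(α * ε))) := by
    fun_prop
  have hPmeas : Measurable (fun w : ℝ × ℚ_[p] =>
      ENNReal.ofReal ((∫ ξ : ℚ_[p], χ (-(w.2 * ξ)) *
        (Real.exp (-w.1 * ‖ξ‖ ^ α) : ℂ) ∂μ).re)) := by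
    have hF : StronglyMeasurable (fun w : (ℝ × ℚ_[p]) × ℚ_[p] =>
        χ (-(w.1.2 * w.2)) * (Real.exp (-w.1.1 * ‖w.2‖ ^ α) : ℂ)) := by
      apply Measurable.stronglyMeasurable
      apply Measurable.mul
      · exact hχmeas.comp (by fun_prop)
      · fun_prop
    have hG : StronglyMeasurable (fun w : ℝ × ℚ_[p] =>
        ∫ ξ : ℚ_[p], χ (-(w.2 * ξ)) * (Real.exp (-w.1 * ‖ξ‖ ^ α) : ℂ) ∂μ) :=
      hF.integral_prod_right'
    exact ENNReal.measurable_ofReal.comp (Complex.measurable_re.comp hG.measurable)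
  have huncurry : Measurable (Function.uncurry fun (t : ℝ) (y : ℚ_[p]) =>
      (‖b (x + y)‖₊ : ℝ≥0∞) ^ (-α) *
        ENNReal.ofReal ((∫ ξ : ℚ_[p], χ (-(y * ξ)) *
          (Real.exp (-t * ‖ξ‖ ^ α) : ℂ) ∂μ).re)) := by
    apply Measurable.mul
    · exact hgmeas.comp measurable_snd
    · exact hPmeas
  have hswap : ∫⁻ t in Set.Ioc (0 : ℝ) T,
      ∫⁻ y in {y : ℚ_[p] | ‖y‖ ≤ 1},
        (‖b (x + y)‖₊ : ℝ≥0∞) ^ (-α) *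
          ENNReal.ofReal ((∫ ξ : ℚ_[p], χ (-(y * ξ)) *
            (Real.exp (-t * ‖ξ‖ ^ α) : ℂ) ∂μ).re) ∂μ =
      ∫⁻ y in {y : ℚ_[p] | ‖y‖ ≤ 1},
        ∫⁻ t in Set.Ioc (0 : ℝ) T,
          (‖b (x + y)‖₊ : ℝ≥0∞) ^ (-α) *
            ENNReal.ofReal ((∫ ξ : ℚ_[p], χ (-(y * ξ)) *
              (Real.exp (-t * ‖ξ‖ ^ α) : ℂ) ∂μ).re) ∂(volume) ∂μ :=
    lintegral_lintegral_swap huncurry.aemeasurable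
  rw [hswap]
  have hpull : ∀ y : ℚ_[p],
      (∫⁻ t in Set.Ioc (0 : ℝ) T,
        (‖b (x + y)‖₊ : ℝ≥0∞) ^ (-α) *
          ENNReal.ofReal ((∫ ξ : ℚ_[p], χ (-(y * ξ)) *
            (Real.exp (-t * ‖ξ‖ ^ α) : ℂ) ∂μ).re) ∂(volume)) =
      (‖b (x + y)‖₊ : ℝ≥0∞) ^ (-α) *
        ∫⁻ t in Set.Ioc (0 : ℝ) T,
          ENNReal.ofReal ((∫ ξ : ℚ_[p], χ (-(y * ξ)) *
            (Real.exp (-t * ‖ξ‖ ^ α) : ℂ) ∂μ).re) ∂(volume) := by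
    intro y
    apply lintegral_const_mul
    exact hPmeas.comp (measurable_id.prodMk measurable_const)
  calc ∫⁻ y in {y : ℚ_[p] | ‖y‖ ≤ 1},
        ∫⁻ t in Set.Ioc (0 : ℝ) T,
          (‖b (x + y)‖₊ : ℝ≥0∞) ^ (-α) *
            ENNReal.ofReal ((∫ ξ : ℚ_[p], χ (-(y * ξ)) *
              (Real.exp (-t * ‖ξ‖ ^ α) : ℂ) ∂μ).re) ∂(volume) ∂μ
      = ∫⁻ y in {y : ℚ_[p] | ‖y‖ ≤ 1},
          (‖b (x + y)‖₊ : ℝ≥0∞) ^ (-α) *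
            ∫⁻ t in Set.Ioc (0 : ℝ) T,
              ENNReal.ofReal ((∫ ξ : ℚ_[p], χ (-(y * ξ)) *
                (Real.exp (-t * ‖ξ‖ ^ α) : ℂ) ∂μ).re) ∂(volume) ∂μ := by
        exact lintegral_congr fun y => hpull y
    _ ≤ ∫⁻ y in {y : ℚ_[p] | ‖y‖ ≤ 1},
          K * ((‖b (x + y)‖₊ : ℝ≥0∞) ^ (-α) * (‖y‖₊ : ℝ≥0∞) ^ (-(α * ε))) ∂μ := by
        refine setLIntegral_mono ?_ ?_
        · exact (measurable_const.mul (hgmeas.mul hXmeas))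
        · intro y hy
          calc (‖b (x + y)‖₊ : ℝ≥0∞) ^ (-α) *
                ∫⁻ t in Set.Ioc (0 : ℝ) T,
                  ENNReal.ofReal ((∫ ξ : ℚ_[p], χ (-(y * ξ)) *
                    (Real.exp (-t * ‖ξ‖ ^ α) : ℂ) ∂μ).re) ∂(volume)
              ≤ (‖b (x + y)‖₊ : ℝ≥0∞) ^ (-α) * (K * (‖y‖₊ : ℝ≥0∞) ^ (-(α * ε))) :=
                mul_le_mul_right (hKbd y hy) _
            _ = K * ((‖b (x + y)‖₊ : ℝ≥0∞) ^ (-α) * (‖y‖₊ : ℝ≥0∞) ^ (-(α * ε))) :=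
                mul_left_comm _ _ _
    _ = K * ∫⁻ y in {y : ℚ_[p] | ‖y‖ ≤ 1},
          (‖b (x + y)‖₊ : ℝ≥0∞) ^ (-α) * (‖y‖₊ : ℝ≥0∞) ^ (-(α * ε)) ∂μ :=
        lintegral_const_mul _ (hgmeas.mul hXmeas)
    _ < ⊤ := by
        apply ENNReal.mul_lt_top hKne.lt_top
        -- Hölder
        have hhold := ENNReal.lintegral_mul_le_Lp_mul_Lq
          (μ.restrict {y : ℚ_[p] | ‖y‖ ≤ 1}) hcc
          (f := fun y => (‖b (x + y)‖₊ : ℝ≥0∞) ^ (-α))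
          (g := fun y => (‖y‖₊ : ℝ≥0∞) ^ (-(α * ε)))
          hgmeas.aemeasurable hXmeas.aemeasurable
        simp only [Pi.mul_apply] at hhold
        refine lt_of_le_of_lt hhold ?_
        have hE1 : (∫⁻ y in {y : ℚ_[p] | ‖y‖ ≤ 1},
            ((‖b (x + y)‖₊ : ℝ≥0∞) ^ (-α)) ^ q' ∂μ) =
            ∫⁻ y in {y : ℚ_[p] | ‖y‖ ≤ 1}, (‖b (x + y)‖₊ : ℝ≥0∞) ^ (-lam) ∂μ := by
          apply lintegral_congr fun y => ?_
          rw [← ENNReal.rpow_mul]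
          congr 1
          rw [hq'def]
          field_simp
        have hE2 : (∫⁻ y in {y : ℚ_[p] | ‖y‖ ≤ 1},
            ((‖y‖₊ : ℝ≥0∞) ^ (-(α * ε))) ^ q ∂μ) =
            ∫⁻ y in {y : ℚ_[p] | ‖y‖ ≤ 1}, (‖y‖₊ : ℝ≥0∞) ^ (-(1/2 : ℝ)) ∂μ := by
          apply lintegral_congr fun y => ?_
          rw [← ENNReal.rpow_mul, hαεq]
        rw [hE1, hE2]
        apply ENNReal.mul_lt_top
        · exact ENNReal.rpow_lt_top_of_nonneg (by positivity) hint.ne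
        · exact ENNReal.rpow_lt_top_of_nonneg (by positivity)
            (lintegral_norm_neg_half hμ).ne
end

section
/- Let p be prime and α > 1. For every positive integer N there is a constant C_N > 0 such that 0 ≤ 1 - g^1(x)/g^1(0) ≤ C_N |x|_p^{α-1} for all x ∈ Q_p with |x|_p ≤ p^N, where g^1(x) = ∫_{Q_p} χ(-xξ)/(1 + |ξ|_p^α) dμ(ξ). -/
open MeasureTheory Set
open scoped ENNReal

namespace Stmt17Aux
set_option linter.unusedSectionVars false

variable {p : ℕ} [hp : Fact p.Prime] [MeasurableSpace ℚ_[p]] [BorelSpace ℚ_[p]]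

/-- closed ball of radius `p^n` -/
def pB (p : ℕ) [Fact p.Prime] (n : ℤ) : Set ℚ_[p] := {ξ | ‖ξ‖ ≤ (p : ℝ) ^ n}

lemma one_lt_pR : (1 : ℝ) < p := by exact_mod_cast hp.out.one_lt

lemma pR_pos : (0 : ℝ) < p := lt_trans one_pos one_lt_pR

lemma meas_pB (n : ℤ) : MeasurableSet (pB p n) :=
  (isClosed_le continuous_norm continuous_const).measurableSet

lemma pB_step (μ : Measure ℚ_[p]) [μ.IsAddHaarMeasure] (n : ℤ) :
    μ (pB p (n + 1)) = p * μ (pB p n) := by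
  classical
  set c : Fin p → ℚ_[p] := fun j => (j : ℕ) * (p : ℚ_[p]) ^ (-(n + 1)) with hc
  set A : Fin p → Set ℚ_[p] := fun j => (fun y => -(c j) + y) ⁻¹' pB p n with hA
  have hnormc : ∀ j : Fin p, ‖c j‖ ≤ (p : ℝ) ^ (n + 1) := by
    intro j
    rw [hc]
    simp only [norm_mul, Padic.norm_p_zpow, neg_neg]
    calc ‖((j : ℕ) : ℚ_[p])‖ * (p : ℝ) ^ (n + 1)
        ≤ 1 * (p : ℝ) ^ (n + 1) := by
          apply mul_le_mul_of_nonneg_right _ (zpow_pos pR_pos _).le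
          have := Padic.norm_int_le_one (p := p) (j : ℕ)
          simpa using this
      _ = (p : ℝ) ^ (n + 1) := one_mul _
  have hmemA : ∀ (j : Fin p) (y : ℚ_[p]), y ∈ A j ↔ ‖y - c j‖ ≤ (p : ℝ) ^ n := by
    intro j y
    simp only [hA, Set.mem_preimage, pB, Set.mem_setOf_eq, neg_add_eq_sub]
  have hcover : pB p (n + 1) = ⋃ j : Fin p, A j := by
    ext x
    simp only [Set.mem_iUnion]
    constructor
    · intro hx
      have hz1 : ‖(p : ℚ_[p]) ^ (n + 1) * x‖ ≤ 1 := by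
        rw [norm_mul, Padic.norm_p_zpow]
        calc (p : ℝ) ^ (-(n+1)) * ‖x‖ ≤ (p : ℝ) ^ (-(n+1)) * (p : ℝ) ^ (n+1) :=
              mul_le_mul_of_nonneg_left hx (zpow_pos pR_pos _).le
          _ = 1 := by rw [← zpow_add₀ (ne_of_gt pR_pos), neg_add_cancel, zpow_zero]
      set z : ℤ_[p] := ⟨(p : ℚ_[p]) ^ (n + 1) * x, hz1⟩ with hzdef
      have hjlt : z.appr 1 < p := by simpa using z.appr_lt 1
      have hspec : ‖z - (z.appr 1 : ℤ_[p])‖ ≤ (p : ℝ) ^ (-(1:ℕ) : ℤ) := by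
        rw [PadicInt.norm_le_pow_iff_mem_span_pow]
        simpa using z.appr_spec 1
      refine ⟨⟨z.appr 1, hjlt⟩, ?_⟩
      rw [hmemA]
      have hxz : x = (p : ℚ_[p]) ^ (-(n + 1)) * ((z : ℚ_[p])) := by
        simp only [hzdef]
        rw [← mul_assoc, ← zpow_add₀, neg_add_cancel, zpow_zero, one_mul]
        exact Nat.cast_ne_zero.mpr hp.out.ne_zero
      have : x - c ⟨z.appr 1, hjlt⟩ = (p : ℚ_[p]) ^ (-(n + 1)) * ((z : ℚ_[p]) - (z.appr 1 : ℕ)) := by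
        rw [hxz, hc]; push_cast; ring
      rw [this, norm_mul, Padic.norm_p_zpow, neg_neg]
      have hnz : ‖(z : ℚ_[p]) - ((z.appr 1 : ℕ) : ℚ_[p])‖ ≤ (p : ℝ) ^ (-1 : ℤ) := by
        have : ((z - (z.appr 1 : ℤ_[p]) : ℤ_[p]) : ℚ_[p]) = (z : ℚ_[p]) - ((z.appr 1 : ℕ) : ℚ_[p]) := by
          push_cast; ring
        rw [← this, PadicInt.padic_norm_e_of_padicInt]
        simpa using hspec
      calc (p : ℝ) ^ (n + 1) * ‖(z : ℚ_[p]) - ((z.appr 1 : ℕ) : ℚ_[p])‖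
          ≤ (p : ℝ) ^ (n + 1) * (p : ℝ) ^ (-1 : ℤ) :=
            mul_le_mul_of_nonneg_left hnz (zpow_pos pR_pos _).le
        _ = (p : ℝ) ^ n := by rw [← zpow_add₀ (ne_of_gt pR_pos)]; ring_nf
    · rintro ⟨j, hj⟩
      rw [hmemA] at hj
      have : x = (x - c j) + c j := by ring
      rw [pB, Set.mem_setOf_eq, this]
      refine le_trans (Padic.nonarchimedean _ _) (max_le ?_ (hnormc j))
      exact le_trans hj (zpow_le_zpow_right₀ one_lt_pR.le (by omega))
  have hdisj : Pairwise (Function.onFun Disjoint A) := by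
    intro j j' hne
    rw [Function.onFun, Set.disjoint_left]
    intro y hyj hyj'
    rw [hmemA] at hyj hyj'
    have hdiff : ‖c j' - c j‖ ≤ (p : ℝ) ^ n := by
      have : c j' - c j = (y - c j) + -(y - c j') := by ring
      rw [this]
      refine le_trans (Padic.nonarchimedean _ _) (max_le hyj ?_)
      rwa [norm_neg]
    have hval : ‖c j' - c j‖ = (p : ℝ) ^ (n + 1) := by
      have hcast : c j' - c j = (((j' : ℕ) : ℤ) - ((j : ℕ) : ℤ) : ℤ) * (p : ℚ_[p]) ^ (-(n + 1)) := by
        rw [hc]; push_cast; ring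
      rw [hcast, norm_mul, Padic.norm_p_zpow, neg_neg]
      have hk : (((j' : ℕ) : ℤ) - ((j : ℕ) : ℤ)) ≠ 0 := by
        intro h
        apply hne
        have : ((j : ℕ) : ℤ) = ((j' : ℕ) : ℤ) := by omega
        have : (j : ℕ) = (j' : ℕ) := by exact_mod_cast this
        exact Fin.ext this
      have hnd : ¬ ((p : ℤ) ∣ (((j' : ℕ) : ℤ) - ((j : ℕ) : ℤ))) := by
        intro hdvd
        have h1 : (((j' : ℕ) : ℤ) - ((j : ℕ) : ℤ)).natAbs < p := by
          have := j.isLt; have := j'.isLt; omega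
        have h2 : (p : ℤ) ∣ ((((j' : ℕ) : ℤ) - ((j : ℕ) : ℤ)).natAbs : ℤ) := by
          rwa [Int.dvd_natAbs]
        have h3 : p ∣ (((j' : ℕ) : ℤ) - ((j : ℕ) : ℤ)).natAbs := by exact_mod_cast h2
        have := Nat.le_of_dvd (by omega) h3
        omega
      have hone : ‖((((j' : ℕ) : ℤ) - ((j : ℕ) : ℤ) : ℤ) : ℚ_[p])‖ = 1 := by
        refine le_antisymm (Padic.norm_int_le_one _) ?_
        by_contra hlt
        push_neg at hlt
        exact hnd (Padic.norm_intCast_lt_one_iff.mp hlt)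
      rw [hone, one_mul]
    rw [hval] at hdiff
    have : (p : ℝ) ^ (n + 1) ≤ (p : ℝ) ^ n := hdiff
    have hlt : (p : ℝ) ^ n < (p : ℝ) ^ (n + 1) := zpow_lt_zpow_right₀ one_lt_pR (by omega)
    linarith
  have hmeasA : ∀ j : Fin p, MeasurableSet (A j) :=
    fun j => measurable_const_add (-(c j)) (meas_pB n)
  have hvolA : ∀ j : Fin p, μ (A j) = μ (pB p n) := fun j => measure_preimage_add μ _ _
  rw [hcover, measure_iUnion hdisj hmeasA]
  simp only [hvolA, tsum_fintype, Finset.sum_const, Finset.card_univ, Fintype.card_fin,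
    nsmul_eq_mul]


lemma pB_vol (μ : Measure ℚ_[p]) [μ.IsAddHaarMeasure]
    (hμ : μ {x : ℚ_[p] | ‖x‖ ≤ 1} = 1) (n : ℤ) :
    μ (pB p n) = ENNReal.ofReal ((p : ℝ) ^ n) := by
  have hp0 : (p : ℝ≥0∞) ≠ 0 := by
    simp [Nat.cast_ne_zero]; exact hp.out.ne_zero
  have hptop : (p : ℝ≥0∞) ≠ ∞ := ENNReal.natCast_ne_top p
  have hcast : (p : ℝ≥0∞) = ENNReal.ofReal (p : ℝ) := by
    simp [ENNReal.ofReal_natCast]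
  have hbase : μ (pB p 0) = ENNReal.ofReal ((p : ℝ) ^ (0 : ℤ)) := by
    have : pB p 0 = {x : ℚ_[p] | ‖x‖ ≤ 1} := by
      ext x; simp [pB]
    rw [this, hμ, zpow_zero]
    simp
  have hup : ∀ k : ℤ, μ (pB p k) = ENNReal.ofReal ((p : ℝ) ^ k) →
      μ (pB p (k + 1)) = ENNReal.ofReal ((p : ℝ) ^ (k + 1)) := by
    intro k ih
    rw [pB_step μ k, ih, hcast, ← ENNReal.ofReal_mul pR_pos.le]
    congr 1
    rw [zpow_add_one₀ (ne_of_gt pR_pos)]; ring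
  induction n using Int.induction_on with
  | zero => exact hbase
  | succ k ih => exact hup k ih
  | pred k ih =>
    have hstep := hup (-(k:ℤ) - 1)
    have h1 : μ (pB p (-(k:ℤ))) = ENNReal.ofReal ((p : ℝ) ^ (-(k:ℤ))) := ih
    have h2 : (p : ℝ≥0∞) * μ (pB p (-(k:ℤ) - 1)) =
        (p : ℝ≥0∞) * ENNReal.ofReal ((p : ℝ) ^ (-(k:ℤ) - 1)) := by
      have := pB_step μ (-(k:ℤ) - 1)
      rw [sub_add_cancel] at this
      rw [← this, h1, hcast, ← ENNReal.ofReal_mul pR_pos.le]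
      congr 1
      rw [show (-(k:ℤ) : ℤ) = (-(k:ℤ) - 1) + 1 by ring, zpow_add_one₀ (ne_of_gt pR_pos)]
      ring
    exact (ENNReal.mul_right_inj hp0 hptop).mp h2

lemma tail_bound (μ : Measure ℚ_[p]) [μ.IsAddHaarMeasure]
    (hμ : μ {x : ℚ_[p] | ‖x‖ ≤ 1} = 1) {α : ℝ} (hα : 1 < α) (m : ℤ) :
    ∫⁻ ξ, Set.indicator {ξ : ℚ_[p] | (p : ℝ) ^ m ≤ ‖ξ‖}
        (fun ξ => ENNReal.ofReal (‖ξ‖ ^ (-α))) ξ ∂μ ≤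
      ENNReal.ofReal ((p : ℝ) ^ ((1 - α) * (m : ℝ))) *
        (1 - ENNReal.ofReal ((p : ℝ) ^ ((1 : ℝ) - α)))⁻¹ := by
  classical
  set S : ℕ → Set ℚ_[p] := fun n => {ξ | ‖ξ‖ = (p : ℝ) ^ (m + (n : ℤ))} with hS
  set c : ℕ → ℝ≥0∞ := fun n => ENNReal.ofReal (((p : ℝ) ^ (m + (n : ℤ))) ^ (-α)) with hc
  have hSmeas : ∀ n, MeasurableSet (S n) :=
    fun n => measurable_norm (measurableSet_singleton _)
  have hpt : ∀ ξ, Set.indicator {ξ : ℚ_[p] | (p : ℝ) ^ m ≤ ‖ξ‖}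
      (fun ξ => ENNReal.ofReal (‖ξ‖ ^ (-α))) ξ ≤
      ∑' n : ℕ, Set.indicator (S n) (fun _ => c n) ξ := by
    intro ξ
    by_cases hmem : ξ ∈ {ξ : ℚ_[p] | (p : ℝ) ^ m ≤ ‖ξ‖}
    · have hξ0 : ξ ≠ 0 := by
        intro h
        rw [Set.mem_setOf_eq, h, norm_zero] at hmem
        exact absurd hmem (not_le.mpr (zpow_pos pR_pos m))
      have hnorm : ‖ξ‖ = (p : ℝ) ^ (-ξ.valuation) := Padic.norm_eq_zpow_neg_valuation hξ0
      have hk : m ≤ -ξ.valuation := by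
        rw [Set.mem_setOf_eq, hnorm] at hmem
        exact (zpow_le_zpow_iff_right₀ one_lt_pR).mp hmem
      set n : ℕ := (-ξ.valuation - m).toNat with hn
      have hmn : m + (n : ℤ) = -ξ.valuation := by
        rw [hn, Int.toNat_of_nonneg (by omega)]; ring
      have hmemS : ξ ∈ S n := by rw [hS]; simp only [Set.mem_setOf_eq, hmn]; exact hnorm
      have hval : Set.indicator {ξ : ℚ_[p] | (p : ℝ) ^ m ≤ ‖ξ‖}
          (fun ξ => ENNReal.ofReal (‖ξ‖ ^ (-α))) ξ = c n := by
        rw [Set.indicator_of_mem hmem, hc]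
        congr 1
        rw [hnorm, hmn]
      rw [hval, ← Set.indicator_of_mem hmemS (fun _ => c n)]
      exact ENNReal.le_tsum n
    · rw [Set.indicator_of_notMem hmem]
      exact zero_le
  have step1 := lintegral_mono hpt (μ := μ)
  have step2 : ∫⁻ ξ, ∑' n : ℕ, Set.indicator (S n) (fun _ => c n) ξ ∂μ =
      ∑' n : ℕ, c n * μ (S n) := by
    rw [lintegral_tsum (fun n => ((measurable_const.indicator (hSmeas n)).aemeasurable))]
    congr 1
    funext n
    rw [lintegral_indicator (hSmeas n), setLIntegral_const]
  have hSvol : ∀ n : ℕ, μ (S n) ≤ ENNReal.ofReal ((p : ℝ) ^ (m + (n : ℤ))) := by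
    intro n
    rw [← pB_vol μ hμ]
    exact measure_mono (fun ξ hξ => le_of_eq hξ)
  have step3 : ∑' n : ℕ, c n * μ (S n) ≤
      ∑' n : ℕ, ENNReal.ofReal ((p : ℝ) ^ ((1 - α) * (m : ℝ))) *
        (ENNReal.ofReal ((p : ℝ) ^ ((1 : ℝ) - α))) ^ n := by
    apply ENNReal.tsum_le_tsum
    intro n
    have h1 : c n * μ (S n) ≤ c n * ENNReal.ofReal ((p : ℝ) ^ (m + (n : ℤ))) :=
      mul_le_mul_right (hSvol n) _
    refine le_trans h1 (le_of_eq ?_)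
    rw [hc, ← ENNReal.ofReal_mul (Real.rpow_nonneg (zpow_pos pR_pos _).le _),
      ← ENNReal.ofReal_pow (Real.rpow_nonneg pR_pos.le _),
      ← ENNReal.ofReal_mul (Real.rpow_nonneg pR_pos.le _)]
    congr 1
    have hzr : ∀ k : ℤ, ((p : ℝ) ^ k) = (p : ℝ) ^ ((k : ℤ) : ℝ) := by
      intro k; rw [Real.rpow_intCast]
    rw [hzr (m + (n:ℤ)), ← Real.rpow_natCast ((p:ℝ) ^ ((1:ℝ) - α)) n,
      ← Real.rpow_mul pR_pos.le, ← Real.rpow_mul pR_pos.le, ← Real.rpow_add pR_pos,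
      ← Real.rpow_add pR_pos]
    congr 1
    push_cast
    ring
  have step4 : ∑' n : ℕ, ENNReal.ofReal ((p : ℝ) ^ ((1 - α) * (m : ℝ))) *
      (ENNReal.ofReal ((p : ℝ) ^ ((1 : ℝ) - α))) ^ n =
      ENNReal.ofReal ((p : ℝ) ^ ((1 - α) * (m : ℝ))) *
        (1 - ENNReal.ofReal ((p : ℝ) ^ ((1 : ℝ) - α)))⁻¹ := by
    rw [ENNReal.tsum_mul_left, ENNReal.tsum_geometric]
  calc ∫⁻ ξ, Set.indicator {ξ : ℚ_[p] | (p : ℝ) ^ m ≤ ‖ξ‖}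
        (fun ξ => ENNReal.ofReal (‖ξ‖ ^ (-α))) ξ ∂μ
      ≤ ∫⁻ ξ, ∑' n : ℕ, Set.indicator (S n) (fun _ => c n) ξ ∂μ := step1
    _ = ∑' n : ℕ, c n * μ (S n) := step2
    _ ≤ _ := step3.trans (le_of_eq step4)

lemma geom_ne_top {α : ℝ} (hα : 1 < α) :
    (1 - ENNReal.ofReal ((p : ℝ) ^ ((1 : ℝ) - α)))⁻¹ ≠ (∞ : ℝ≥0∞) := by
  rw [ENNReal.inv_ne_top]
  intro h
  have hr1 : ENNReal.ofReal ((p : ℝ) ^ ((1 : ℝ) - α)) < 1 := by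
    rw [ENNReal.ofReal_lt_one]
    exact Real.rpow_lt_one_of_one_lt_of_neg one_lt_pR (by linarith)
  rw [tsub_eq_zero_iff_le] at h
  exact absurd h (not_le.mpr hr1)

lemma integrable_kernel (μ : Measure ℚ_[p]) [μ.IsAddHaarMeasure]
    (hμ : μ {x : ℚ_[p] | ‖x‖ ≤ 1} = 1)
    (χ : ℚ_[p] → ℂ) (hχmeas : Measurable χ) (hχnorm : ∀ a, ‖χ a‖ = 1)
    {α : ℝ} (hα : 1 < α) (x : ℚ_[p]) :
    Integrable (fun ξ : ℚ_[p] => χ (-(x * ξ)) / ((1 + ‖ξ‖ ^ α : ℝ) : ℂ)) μ := by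
  have hden_pos : ∀ ξ : ℚ_[p], (0 : ℝ) < 1 + ‖ξ‖ ^ α := by
    intro ξ
    have := Real.rpow_nonneg (norm_nonneg ξ) α
    linarith
  have hmeas : Measurable (fun ξ : ℚ_[p] => χ (-(x * ξ)) / ((1 + ‖ξ‖ ^ α : ℝ) : ℂ)) := by
    apply Measurable.div
    · exact hχmeas.comp ((measurable_const.mul measurable_id).neg)
    · apply Complex.measurable_ofReal.comp
      apply Measurable.add measurable_const
      exact (continuous_norm.rpow_const (fun ξ => Or.inr (by linarith))).measurable
  have hnormf : ∀ ξ : ℚ_[p], ‖χ (-(x * ξ)) / ((1 + ‖ξ‖ ^ α : ℝ) : ℂ)‖ =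
      (1 + ‖ξ‖ ^ α)⁻¹ := by
    intro ξ
    rw [norm_div, hχnorm, Complex.norm_real, Real.norm_eq_abs,
      abs_of_pos (hden_pos ξ), one_div]
  refine ⟨hmeas.aestronglyMeasurable, ?_⟩
  rw [hasFiniteIntegral_iff_norm]
  have hbound : ∀ ξ : ℚ_[p], ENNReal.ofReal ‖χ (-(x * ξ)) / ((1 + ‖ξ‖ ^ α : ℝ) : ℂ)‖ ≤
      Set.indicator (pB p 0) (fun _ => (1 : ℝ≥0∞)) ξ +
      Set.indicator {ξ : ℚ_[p] | (p : ℝ) ^ (1 : ℤ) ≤ ‖ξ‖}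
        (fun ξ => ENNReal.ofReal (‖ξ‖ ^ (-α))) ξ := by
    intro ξ
    rw [hnormf ξ]
    by_cases h1 : ‖ξ‖ ≤ 1
    · have hmem : ξ ∈ pB p 0 := by simp [pB, h1]
      refine le_trans ?_ (le_add_right (le_of_eq (Set.indicator_of_mem hmem _).symm))
      rw [show (1:ℝ≥0∞) = ENNReal.ofReal 1 by simp]
      apply ENNReal.ofReal_le_ofReal
      rw [inv_le_one_iff₀]
      right
      have := Real.rpow_nonneg (norm_nonneg ξ) α
      linarith
    · have hmem : ξ ∈ {ξ : ℚ_[p] | (p : ℝ) ^ (1 : ℤ) ≤ ‖ξ‖} := by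
        rw [Set.mem_setOf_eq]
        by_contra hlt
        push_neg at hlt
        rw [show (1:ℤ) = 0 + 1 by ring, ← Padic.norm_le_pow_iff_norm_lt_pow_add_one] at hlt
        exact h1 (by simpa using hlt)
      refine le_trans ?_ (le_add_left (le_of_eq (Set.indicator_of_mem hmem _).symm))
      apply ENNReal.ofReal_le_ofReal
      have hξpos : (0 : ℝ) < ‖ξ‖ := by
        push_neg at h1; linarith
      rw [Real.rpow_neg (norm_nonneg ξ)]
      apply inv_anti₀ (Real.rpow_pos_of_pos hξpos α)
      linarith
  calc ∫⁻ ξ, ENNReal.ofReal ‖χ (-(x * ξ)) / ((1 + ‖ξ‖ ^ α : ℝ) : ℂ)‖ ∂μ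
      ≤ ∫⁻ ξ, (Set.indicator (pB p 0) (fun _ => (1 : ℝ≥0∞)) ξ +
        Set.indicator {ξ : ℚ_[p] | (p : ℝ) ^ (1 : ℤ) ≤ ‖ξ‖}
          (fun ξ => ENNReal.ofReal (‖ξ‖ ^ (-α))) ξ) ∂μ := lintegral_mono hbound
    _ = (∫⁻ ξ, Set.indicator (pB p 0) (fun _ => (1 : ℝ≥0∞)) ξ ∂μ) +
        ∫⁻ ξ, Set.indicator {ξ : ℚ_[p] | (p : ℝ) ^ (1 : ℤ) ≤ ‖ξ‖}
          (fun ξ => ENNReal.ofReal (‖ξ‖ ^ (-α))) ξ ∂μ :=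
        lintegral_add_left (measurable_const.indicator (meas_pB 0)) _
    _ < ∞ := by
        apply ENNReal.add_lt_top.mpr
        constructor
        · rw [lintegral_indicator (meas_pB 0), setLIntegral_const, one_mul, pB_vol μ hμ]
          exact ENNReal.ofReal_lt_top
        · refine lt_of_le_of_lt (tail_bound μ hμ hα 1) ?_
          exact ENNReal.mul_lt_top ENNReal.ofReal_lt_top
            (lt_top_iff_ne_top.mpr (geom_ne_top (p := p) hα))

end Stmt17Aux

open MeasureTheory

/-- Lemma 3 of the paper: for every positive integer `N` there is
`C_N > 0` with `0 ≤ 1 - g¹(x)/g¹(0) ≤ C_N |x|_p^{α-1}` for all `|x|_p ≤ p^N`. -/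
theorem stmt17 (p : ℕ) [Fact p.Prime] [MeasurableSpace ℚ_[p]] [BorelSpace ℚ_[p]]
    (μ : Measure ℚ_[p]) [μ.IsAddHaarMeasure]
    (hμ : μ {x : ℚ_[p] | ‖x‖ ≤ 1} = 1)
    (χ : ℚ_[p] → ℂ) (hχmeas : Measurable χ)
    (hχnorm : ∀ a, ‖χ a‖ = 1)
    (hχadd : ∀ a b, χ (a + b) = χ a * χ b)
    (hχtriv : ∀ a : ℚ_[p], ‖a‖ ≤ 1 → χ a = 1)
    (hχnontriv : ∀ a : ℚ_[p], 1 < ‖a‖ → χ a ≠ 1)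
    (α : ℝ) (hα : 1 < α)
    (g : ℚ_[p] → ℝ)
    (hg : ∀ x, g x =
      (∫ ξ : ℚ_[p], χ (-(x * ξ)) / ((1 + ‖ξ‖ ^ α : ℝ) : ℂ) ∂μ).re)
    (N : ℕ) (hN : 0 < N) :
    ∃ C > 0, ∀ x : ℚ_[p], ‖x‖ ≤ (p : ℝ) ^ (N : ℤ) →
      0 ≤ 1 - g x / g 0 ∧ 1 - g x / g 0 ≤ C * ‖x‖ ^ (α - 1) := by
  classical
  have hp1 : (1 : ℝ) < p := Stmt17Aux.one_lt_pR
  have hp0 : (0 : ℝ) < p := Stmt17Aux.pR_pos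
  have hd : ∀ ξ : ℚ_[p], (0 : ℝ) < 1 + ‖ξ‖ ^ α := by
    intro ξ
    have := Real.rpow_nonneg (norm_nonneg ξ) α
    linarith
  have hint : ∀ x : ℚ_[p],
      Integrable (fun ξ : ℚ_[p] => χ (-(x * ξ)) / ((1 + ‖ξ‖ ^ α : ℝ) : ℂ)) μ :=
    Stmt17Aux.integrable_kernel μ hμ χ hχmeas hχnorm hα
  have hre_le : ∀ a : ℚ_[p], (χ a).re ≤ 1 := by
    intro a
    calc (χ a).re ≤ |(χ a).re| := le_abs_self _
      _ ≤ ‖χ a‖ := Complex.abs_re_le_norm _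
      _ = ‖χ a‖ := rfl
      _ = 1 := hχnorm a
  have hre_ge : ∀ a : ℚ_[p], -1 ≤ (χ a).re := by
    intro a
    have h1 : |(χ a).re| ≤ 1 := by
      rw [← hχnorm a]
      exact Complex.abs_re_le_norm _
    linarith [abs_le.mp h1 |>.1]
  have hgx : ∀ x, g x = ∫ ξ, (χ (-(x * ξ))).re / (1 + ‖ξ‖ ^ α) ∂μ := by
    intro x
    have h := integral_re (hint x)
    simp only [RCLike.re_to_complex] at h
    rw [hg x, ← h]
    congr 1
    funext ξ
    rw [Complex.div_ofReal_re]
  have hGint : ∀ x : ℚ_[p],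
      Integrable (fun ξ : ℚ_[p] => (χ (-(x * ξ))).re / (1 + ‖ξ‖ ^ α)) μ := by
    intro x
    refine (hint x).re.congr (Filter.Eventually.of_forall fun ξ => ?_)
    simp only [RCLike.re_to_complex, Complex.div_ofReal_re]
  have hχ0 : χ 0 = 1 := hχtriv 0 (by simp)
  have hHint : Integrable (fun ξ : ℚ_[p] => (1 + ‖ξ‖ ^ α)⁻¹) μ := by
    refine (hGint 0).congr (Filter.Eventually.of_forall fun ξ => ?_)
    simp only [zero_mul, neg_zero, hχ0, Complex.one_re, one_div]
  have hg0 : g 0 = ∫ ξ, (1 + ‖ξ‖ ^ α)⁻¹ ∂μ := by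
    rw [hgx 0]
    congr 1
    funext ξ
    rw [zero_mul, neg_zero, hχ0]
    simp [one_div]
  have hHnn : ∀ ξ : ℚ_[p], 0 ≤ (1 + ‖ξ‖ ^ α)⁻¹ := fun ξ => (inv_pos.mpr (hd ξ)).le
  have hg0_half : 1 / 2 ≤ g 0 := by
    rw [hg0]
    have hvol : μ (Stmt17Aux.pB p 0) ≠ ∞ := by
      rw [Stmt17Aux.pB_vol μ hμ]
      exact ENNReal.ofReal_ne_top
    have h1 : (1 / 2 : ℝ) * (μ (Stmt17Aux.pB p 0)).toReal ≤
        ∫ ξ in Stmt17Aux.pB p 0, (1 + ‖ξ‖ ^ α)⁻¹ ∂μ := by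
      apply setIntegral_ge_of_const_le_real (Stmt17Aux.meas_pB 0) hvol
      · intro ξ hξ
        have hmem : ‖ξ‖ ≤ 1 := by
          have := hξ
          simp only [Stmt17Aux.pB, Set.mem_setOf_eq, zpow_zero] at this
          exact this
        have hle1 : ‖ξ‖ ^ α ≤ 1 := Real.rpow_le_one (norm_nonneg _) hmem (by linarith)
        rw [le_inv_comm₀ (by norm_num) (hd ξ)]
        · linarith
      · exact hHint.integrableOn
    have h2 : ∫ ξ in Stmt17Aux.pB p 0, (1 + ‖ξ‖ ^ α)⁻¹ ∂μ ≤ ∫ ξ, (1 + ‖ξ‖ ^ α)⁻¹ ∂μ :=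
      setIntegral_le_integral hHint (Filter.Eventually.of_forall hHnn)
    have h3 : (μ (Stmt17Aux.pB p 0)).toReal = 1 := by
      rw [Stmt17Aux.pB_vol μ hμ]
      simp
    rw [h3] at h1
    linarith
  have hg0pos : 0 < g 0 := by linarith
  have hg0ne : g 0 ≠ 0 := ne_of_gt hg0pos
  have hdiff : ∀ x, g 0 - g x = ∫ ξ, (1 - (χ (-(x * ξ))).re) / (1 + ‖ξ‖ ^ α) ∂μ := by
    intro x
    rw [hg0, hgx x, ← integral_sub hHint (hGint x)]
    congr 1
    funext ξ
    rw [sub_div, one_div]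
  have hFnn : ∀ x ξ, 0 ≤ (1 - (χ (-(x * ξ))).re) / (1 + ‖ξ‖ ^ α) := by
    intro x ξ
    exact div_nonneg (by linarith [hre_le (-(x * ξ))]) (hd ξ).le
  have hdiffnn : ∀ x, 0 ≤ g 0 - g x := by
    intro x
    rw [hdiff x]
    exact integral_nonneg (hFnn x)
  have hErnn : (0 : ℝ) ≤ ((1 - ENNReal.ofReal ((p : ℝ) ^ ((1 : ℝ) - α)))⁻¹).toReal :=
    ENNReal.toReal_nonneg
  set Er : ℝ := ((1 - ENNReal.ofReal ((p : ℝ) ^ ((1 : ℝ) - α)))⁻¹).toReal with hEr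
  set q : ℝ := (p : ℝ) ^ ((1 : ℝ) - α) with hq
  have hqpos : 0 < q := Real.rpow_pos_of_pos hp0 _
  refine ⟨1 + 4 * Er * q, by nlinarith, fun x hx => ?_⟩
  have h1sub : 1 - g x / g 0 = (g 0 - g x) / g 0 := by
    field_simp
  constructor
  · rw [h1sub]
    exact div_nonneg (hdiffnn x) hg0pos.le
  by_cases hx0 : x = 0
  · subst hx0
    rw [div_self hg0ne, sub_self, norm_zero, Real.zero_rpow (by linarith : α - 1 ≠ 0), mul_zero]
  -- main case
  set w : ℤ := -x.valuation with hw
  have hxnorm : ‖x‖ = (p : ℝ) ^ w := Padic.norm_eq_zpow_neg_valuation hx0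
  have hvanish : ∀ ξ : ℚ_[p], ¬ ((p : ℝ) ^ (1 - w) ≤ ‖ξ‖) →
      (1 - (χ (-(x * ξ))).re) / (1 + ‖ξ‖ ^ α) = 0 := by
    intro ξ hξ
    push_neg at hξ
    have hle : ‖ξ‖ ≤ (p : ℝ) ^ (-w) := by
      have := (Padic.norm_lt_pow_iff_norm_le_pow_sub_one ξ (1 - w)).mp hξ
      simpa [show (1 - w - 1 : ℤ) = -w by ring] using this
    have hprod : ‖-(x * ξ)‖ ≤ 1 := by
      rw [norm_neg, norm_mul, hxnorm]
      calc (p : ℝ) ^ w * ‖ξ‖ ≤ (p : ℝ) ^ w * (p : ℝ) ^ (-w) :=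
            mul_le_mul_of_nonneg_left hle (zpow_pos hp0 _).le
        _ = 1 := by rw [← zpow_add₀ (ne_of_gt hp0), add_neg_cancel, zpow_zero]
    rw [hχtriv _ hprod]
    simp
  have hFintegrable :
      Integrable (fun ξ : ℚ_[p] => (1 - (χ (-(x * ξ))).re) / (1 + ‖ξ‖ ^ α)) μ := by
    refine (hHint.sub (hGint x)).congr (Filter.Eventually.of_forall fun ξ => ?_)
    show _ = (1 - (χ (-(x * ξ))).re) / (1 + ‖ξ‖ ^ α)
    rw [Pi.sub_apply, sub_div, one_div]
  have heq : ∫ ξ, (1 - (χ (-(x * ξ))).re) / (1 + ‖ξ‖ ^ α) ∂μ =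
      (∫⁻ ξ, ENNReal.ofReal ((1 - (χ (-(x * ξ))).re) / (1 + ‖ξ‖ ^ α)) ∂μ).toReal :=
    integral_eq_lintegral_of_nonneg_ae (Filter.Eventually.of_forall (hFnn x))
      hFintegrable.aestronglyMeasurable
  have hptbd : ∀ ξ : ℚ_[p],
      ENNReal.ofReal ((1 - (χ (-(x * ξ))).re) / (1 + ‖ξ‖ ^ α)) ≤
      Set.indicator {ξ : ℚ_[p] | (p : ℝ) ^ (1 - w) ≤ ‖ξ‖}
        (fun ξ => 2 * ENNReal.ofReal (‖ξ‖ ^ (-α))) ξ := by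
    intro ξ
    by_cases hmem : ξ ∈ {ξ : ℚ_[p] | (p : ℝ) ^ (1 - w) ≤ ‖ξ‖}
    · rw [Set.indicator_of_mem hmem]
      have hξpos : (0 : ℝ) < ‖ξ‖ := lt_of_lt_of_le (zpow_pos hp0 _) hmem
      have hs : (0 : ℝ) < ‖ξ‖ ^ α := Real.rpow_pos_of_pos hξpos α
      have h2 : (1 - (χ (-(x * ξ))).re) ≤ 2 := by linarith [hre_ge (-(x * ξ))]
      have hle2 : (1 - (χ (-(x * ξ))).re) / (1 + ‖ξ‖ ^ α) ≤ 2 * ‖ξ‖ ^ (-α) := by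
        calc (1 - (χ (-(x * ξ))).re) / (1 + ‖ξ‖ ^ α) ≤ 2 / (‖ξ‖ ^ α) :=
              div_le_div₀ (by norm_num) h2 hs (by linarith)
          _ = 2 * ‖ξ‖ ^ (-α) := by
              rw [Real.rpow_neg (norm_nonneg _), div_eq_mul_inv]
      calc ENNReal.ofReal ((1 - (χ (-(x * ξ))).re) / (1 + ‖ξ‖ ^ α)) ≤
            ENNReal.ofReal (2 * ‖ξ‖ ^ (-α)) := ENNReal.ofReal_le_ofReal hle2
        _ = 2 * ENNReal.ofReal (‖ξ‖ ^ (-α)) := by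
            rw [ENNReal.ofReal_mul (by norm_num)]
            norm_num
    · rw [Set.indicator_of_notMem hmem, hvanish ξ hmem]
      simp
  have hlint : ∫⁻ ξ, ENNReal.ofReal ((1 - (χ (-(x * ξ))).re) / (1 + ‖ξ‖ ^ α)) ∂μ ≤
      2 * (ENNReal.ofReal ((p : ℝ) ^ ((1 - α) * ((1 - w : ℤ) : ℝ))) *
        (1 - ENNReal.ofReal ((p : ℝ) ^ ((1 : ℝ) - α)))⁻¹) := by
    refine le_trans (lintegral_mono hptbd) ?_
    have hrw : ∀ ξ : ℚ_[p], Set.indicator {ξ : ℚ_[p] | (p : ℝ) ^ (1 - w) ≤ ‖ξ‖}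
        (fun ξ => 2 * ENNReal.ofReal (‖ξ‖ ^ (-α))) ξ =
        2 * Set.indicator {ξ : ℚ_[p] | (p : ℝ) ^ (1 - w) ≤ ‖ξ‖}
          (fun ξ => ENNReal.ofReal (‖ξ‖ ^ (-α))) ξ := by
      intro ξ
      by_cases hmem : ξ ∈ {ξ : ℚ_[p] | (p : ℝ) ^ (1 - w) ≤ ‖ξ‖}
      · rw [Set.indicator_of_mem hmem, Set.indicator_of_mem hmem]
      · rw [Set.indicator_of_notMem hmem, Set.indicator_of_notMem hmem, mul_zero]
    rw [lintegral_congr hrw,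
      lintegral_const_mul' _ _ (by norm_num : (2 : ℝ≥0∞) ≠ ∞)]
    exact mul_le_mul_right (Stmt17Aux.tail_bound μ hμ hα (1 - w)) 2
  have hbne : (2 : ℝ≥0∞) * (ENNReal.ofReal ((p : ℝ) ^ ((1 - α) * ((1 - w : ℤ) : ℝ))) *
      (1 - ENNReal.ofReal ((p : ℝ) ^ ((1 : ℝ) - α)))⁻¹) ≠ ∞ := by
    apply ENNReal.mul_ne_top (by norm_num)
    exact ENNReal.mul_ne_top ENNReal.ofReal_ne_top (Stmt17Aux.geom_ne_top (p := p) hα)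
  have hreal : g 0 - g x ≤ 2 * ((p : ℝ) ^ ((1 - α) * ((1 - w : ℤ) : ℝ)) * Er) := by
    rw [hdiff x, heq]
    refine le_trans (ENNReal.toReal_mono hbne hlint) (le_of_eq ?_)
    rw [ENNReal.toReal_mul, ENNReal.toReal_mul, ENNReal.toReal_ofNat,
      ENNReal.toReal_ofReal (Real.rpow_nonneg hp0.le _)]
  have hexp : (p : ℝ) ^ ((1 - α) * ((1 - w : ℤ) : ℝ)) = q * ‖x‖ ^ (α - 1) := by
    rw [hxnorm, hq, ← Real.rpow_intCast (p : ℝ) w, ← Real.rpow_mul hp0.le,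
      ← Real.rpow_add hp0]
    congr 1
    push_cast
    ring
  have htnn : (0 : ℝ) ≤ ‖x‖ ^ (α - 1) := Real.rpow_nonneg (norm_nonneg x) _
  rw [h1sub]
  have hstep1 : (g 0 - g x) / g 0 ≤ (g 0 - g x) * 2 := by
    rw [div_eq_mul_inv]
    apply mul_le_mul_of_nonneg_left _ (hdiffnn x)
    calc (g 0)⁻¹ ≤ ((1:ℝ)/2)⁻¹ := inv_anti₀ (by norm_num) hg0_half
      _ = 2 := by norm_num
  rw [hexp] at hreal
  calc (g 0 - g x) / g 0 ≤ (g 0 - g x) * 2 := hstep1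
    _ ≤ (2 * (q * ‖x‖ ^ (α - 1) * Er)) * 2 := by nlinarith
    _ = (4 * Er * q) * ‖x‖ ^ (α - 1) := by ring
    _ ≤ (1 + 4 * Er * q) * ‖x‖ ^ (α - 1) := by nlinarith
end
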